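/- arXiv:1702.04795 — 7 statements merged into one kernel-verified Lean document; each statement's English description precedes it below -/
import Mathlib

section
/- Let R=(r_n) be a strictly increasing sequence of natural numbers such that r_{n+1}/r_n → ∞. Then for every operator f on R (given by integers a_0,…,a_d with a_d ≠ 0 and d ≥ 1), the set {n ∈ ℕ : f(n) = 0} is finite. -/
open Filter

/-- If `r` is a strictly increasing sequence of naturals with
`r (n+1) / r n → ∞`, then every operator `f(n) = a₀ r n + ⋯ + a_d r (n+d)`
(with `d ≥ 1` and `a_d ≠ 0`) has finitely many zeros. -/
theorem operator_zeros_finite_of_ratio_tendsto_atTop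
    (r : ℕ → ℕ) (hmono : StrictMono r)
    (hratio : Tendsto (fun n => (r (n + 1) : ℝ) / r n) atTop atTop)
    (d : ℕ) (hd : 1 ≤ d) (a : ℕ → ℤ) (had : a d ≠ 0) :
    {n : ℕ | (∑ i ∈ Finset.range (d + 1), a i * (r (n + i) : ℤ)) = 0}.Finite := by
  set C : ℤ := (∑ i ∈ Finset.range d, |a i|) + 1 with hCdef
  have hCpos : 0 < C := by
    have : 0 ≤ ∑ i ∈ Finset.range d, |a i| :=
      Finset.sum_nonneg fun i _ => abs_nonneg _
    omega
  obtain ⟨N, hN⟩ := (hratio.eventually_gt_atTop (C : ℝ)).exists_forall_of_atTop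
  apply Set.Finite.subset (Set.finite_Iic (max N 1))
  intro n hn
  by_contra hgt
  simp only [Set.mem_Iic, not_le] at hgt
  have hn1 : 1 ≤ n := le_trans (le_max_right N 1) hgt.le
  have hnN : N ≤ n + d - 1 := by omega
  have hm1 : (n + d - 1) + 1 = n + d := by omega
  have hr0 : 0 < r (n + d - 1) := by
    have : n + d - 1 ≤ r (n + d - 1) := hmono.le_apply; omega
  have hkey : (C : ℝ) < (r (n + d) : ℝ) / r (n + d - 1) := by
    have := hN (n + d - 1) hnN
    rwa [hm1] at this
  have hkey2 : C * (r (n + d - 1) : ℤ) < (r (n + d) : ℤ) := by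
    have hpos : (0 : ℝ) < (r (n + d - 1) : ℝ) := by exact_mod_cast hr0
    have := (lt_div_iff₀ hpos).1 hkey
    exact_mod_cast this
  have hsum : (∑ i ∈ Finset.range (d + 1), a i * (r (n + i) : ℤ)) = 0 := hn
  rw [Finset.sum_range_succ] at hsum
  -- bound: |∑_{i<d} a i * r (n+i)| ≤ (C-1) * r (n+d-1)
  have hbound : |∑ i ∈ Finset.range d, a i * (r (n + i) : ℤ)|
      ≤ (C - 1) * (r (n + d - 1) : ℤ) := by
    calc |∑ i ∈ Finset.range d, a i * (r (n + i) : ℤ)|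
        ≤ ∑ i ∈ Finset.range d, |a i * (r (n + i) : ℤ)| :=
          Finset.abs_sum_le_sum_abs _ _
      _ ≤ ∑ i ∈ Finset.range d, |a i| * (r (n + d - 1) : ℤ) := by
          apply Finset.sum_le_sum
          intro i hi
          rw [abs_mul, abs_of_nonneg (by positivity : (0:ℤ) ≤ (r (n+i) : ℤ))]
          apply mul_le_mul_of_nonneg_left _ (abs_nonneg _)
          have : n + i ≤ n + d - 1 := by
            have := Finset.mem_range.1 hi; omega
          exact_mod_cast hmono.monotone this
      _ = (C - 1) * (r (n + d - 1) : ℤ) := by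
          rw [hCdef, ← Finset.sum_mul]; ring_nf
  have hrd : |a d * (r (n + d) : ℤ)| ≥ (r (n + d) : ℤ) := by
    rw [abs_mul, abs_of_nonneg (by positivity : (0:ℤ) ≤ (r (n+d) : ℤ))]
    have h1 : 1 ≤ |a d| := by
      rcases lt_or_gt_of_ne had with h | h
      · rw [abs_of_neg h]; omega
      · rw [abs_of_pos h]; omega
    nlinarith [hr0, hkey2]
  have : |a d * (r (n + d) : ℤ)| = |∑ i ∈ Finset.range d, a i * (r (n + i) : ℤ)| := by
    have : a d * (r (n + d) : ℤ) = -(∑ i ∈ Finset.range d, a i * (r (n + i) : ℤ)) := by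
      linarith
    rw [this, abs_neg]
  have hC1 : (C - 1) * (r (n + d - 1) : ℤ) < C * (r (n + d - 1) : ℤ) := by
    have : (0:ℤ) < (r (n + d - 1) : ℤ) := by exact_mod_cast hr0
    nlinarith
  linarith [hbound, hrd, hkey2, hC1, this.le]
end

section
/- Let R=(r_n) be a strictly increasing sequence of natural numbers such that r_{n+1}/r_n converges to a real number θ. Let a_0,…,a_d ∈ ℤ be such that Σ_{i=0}^d a_i θ^i ≠ 0. Then there exists k ∈ ℕ such that for all n ≥ k one has a_0 r_n + a_1 r_{n+1} + ⋯ + a_d r_{n+d} ≠ 0. -/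
open Filter

private lemma ratio_pow (r : ℕ → ℕ) (hmono : StrictMono r) (θ : ℝ)
    (hratio : Tendsto (fun n => (r (n + 1) : ℝ) / r n) atTop (nhds θ)) :
    ∀ i : ℕ, Tendsto (fun n => (r (n + i) : ℝ) / r n) atTop (nhds (θ ^ i)) := by
  have hpos : ∀ᶠ n in atTop, (0:ℝ) < r n := by
    filter_upwards [eventually_ge_atTop 1] with n hn
    exact_mod_cast Nat.lt_of_lt_of_le (Nat.lt_of_lt_of_le Nat.zero_lt_one hn)
      (hmono.le_apply)
  intro i
  induction i with
  | zero =>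
    simp only [Nat.add_zero, pow_zero]
    refine Tendsto.congr' ?_ tendsto_const_nhds
    filter_upwards [hpos] with n hn
    exact (div_self hn.ne').symm
  | succ i ih =>
    have h1 : Tendsto (fun n => (r (n + i + 1) : ℝ) / r (n + i)) atTop (nhds θ) :=
      hratio.comp (tendsto_add_atTop_nat i)
    have := h1.mul ih
    rw [← pow_succ'] at this
    refine Tendsto.congr' ?_ this
    have hpos' : ∀ᶠ n in atTop, (0:ℝ) < r (n + i) :=
      (tendsto_add_atTop_nat i).eventually hpos
    filter_upwards [hpos', hpos] with n h1 h2
    field_simp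
    ring_nf

/-- If `r (n+1) / r n → θ` and `∑ aᵢ θ^i ≠ 0`, then
`a₀ r n + ⋯ + a_d r (n+d) ≠ 0` for all sufficiently large `n`. -/
theorem operator_eventually_nonzero_of_eval_ne_zero
    (r : ℕ → ℕ) (hmono : StrictMono r) (θ : ℝ)
    (hratio : Tendsto (fun n => (r (n + 1) : ℝ) / r n) atTop (nhds θ))
    (d : ℕ) (a : ℕ → ℤ)
    (ha : (∑ i ∈ Finset.range (d + 1), (a i : ℝ) * θ ^ i) ≠ 0) :
    ∃ k : ℕ, ∀ n ≥ k, (∑ i ∈ Finset.range (d + 1), a i * (r (n + i) : ℤ)) ≠ 0 := by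
  have hpos : ∀ᶠ n in atTop, (0:ℝ) < r n := by
    filter_upwards [eventually_ge_atTop 1] with n hn
    exact_mod_cast Nat.lt_of_lt_of_le (Nat.lt_of_lt_of_le Nat.zero_lt_one hn)
      (hmono.le_apply)
  have hsum : Tendsto (fun n => ∑ i ∈ Finset.range (d + 1),
      (a i : ℝ) * ((r (n + i) : ℝ) / r n)) atTop
      (nhds (∑ i ∈ Finset.range (d + 1), (a i : ℝ) * θ ^ i)) := by
    refine tendsto_finset_sum _ fun i _ => ?_
    exact (ratio_pow r hmono θ hratio i).const_mul _
  have hne : ∀ᶠ n in atTop, (∑ i ∈ Finset.range (d + 1),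
      (a i : ℝ) * ((r (n + i) : ℝ) / r n)) ≠ 0 := hsum.eventually_ne ha
  have : ∀ᶠ n in atTop,
      (∑ i ∈ Finset.range (d + 1), a i * (r (n + i) : ℤ)) ≠ 0 := by
    filter_upwards [hne, hpos] with n hn hp hcon
    apply hn
    have : (∑ i ∈ Finset.range (d + 1), (a i : ℝ) * (r (n + i) : ℝ)) = 0 := by
      have := congrArg (fun z : ℤ => (z : ℝ)) hcon
      push_cast at this
      simpa using this
    calc (∑ i ∈ Finset.range (d + 1), (a i : ℝ) * ((r (n + i) : ℝ) / r n))
        = (∑ i ∈ Finset.range (d + 1), (a i : ℝ) * (r (n + i) : ℝ)) / r n := by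
          rw [Finset.sum_div]; exact Finset.sum_congr rfl fun i _ => (mul_div_assoc _ _ _).symm
      _ = 0 := by rw [this, zero_div]
  rcases this.exists_forall_of_atTop with ⟨k, hk⟩
  exact ⟨k, hk⟩
end

section
/- Let R=(r_n) be a regular sequence. Then for every operator f on R, the set {n ∈ ℕ : f(n) = 0} is either finite or cofinite in ℕ. -/
open Filter

/-- `r` satisfies a linear recurrence relation over `ℤ` whose characteristic
polynomial `X^k - ∑_{i<k} cᵢ X^i` is the minimal polynomial of `θ` over `ℚ`. -/
def SatisfiesRecurrenceMinpoly (r : ℕ → ℕ) (θ : ℝ) : Prop :=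
  ∃ k : ℕ, 0 < k ∧ ∃ c : ℕ → ℤ,
    (∀ n : ℕ, (r (n + k) : ℤ) = ∑ i ∈ Finset.range k, c i * r (n + i)) ∧
    (Polynomial.X ^ k - ∑ i ∈ Finset.range k, Polynomial.C (c i : ℚ) * Polynomial.X ^ i)
      = minpoly ℚ θ

/-- A strictly increasing sequence `r` of naturals is regular if the ratios
`r (n+1) / r n` tend to `∞` or converge to some real `θ > 1` which, if
algebraic, is such that `r` satisfies a linear recurrence whose characteristic
polynomial is the minimal polynomial of `θ`. -/
def IsRegularSequence (r : ℕ → ℕ) : Prop :=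
  StrictMono r ∧
    (Tendsto (fun n => (r (n + 1) : ℝ) / r n) atTop atTop ∨
      ∃ θ : ℝ, 1 < θ ∧ Tendsto (fun n => (r (n + 1) : ℝ) / r n) atTop (nhds θ) ∧
        (IsAlgebraic ℚ θ → SatisfiesRecurrenceMinpoly r θ))

/-! ### Auxiliary lemmas -/

/-- The shift operator on rational sequences, as a `ℚ`-linear endomorphism. -/
noncomputable def shiftEnd : Module.End ℚ (ℕ → ℚ) :=
  { toFun := fun s n => s (n + 1)
    map_add' := fun _ _ => rfl
    map_smul' := fun _ _ => rfl }

lemma shiftEnd_pow (i : ℕ) (s : ℕ → ℚ) (n : ℕ) : (shiftEnd ^ i) s n = s (n + i) := by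
  induction i generalizing s n with
  | zero => rfl
  | succ j ih =>
    rw [pow_succ', Module.End.mul_apply]
    show ((shiftEnd ^ j) s) (n + 1) = _
    rw [ih, show n + 1 + j = n + (j + 1) from by omega]

lemma aeval_sum_apply (b : ℕ → ℚ) (N : ℕ) (s : ℕ → ℚ) (n : ℕ) :
    (Polynomial.aeval shiftEnd (∑ i ∈ Finset.range N, Polynomial.C (b i) * Polynomial.X ^ i)) s n
      = ∑ i ∈ Finset.range N, b i * s (n + i) := by
  rw [map_sum]
  rw [LinearMap.coe_sum, Finset.sum_apply, Finset.sum_apply]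
  refine Finset.sum_congr rfl fun i _ => ?_
  rw [map_mul, Polynomial.aeval_C, Polynomial.aeval_X_pow, Module.End.mul_apply,
    Module.algebraMap_end_apply]
  simp [shiftEnd_pow]

lemma aeval_charpoly_apply (c : ℕ → ℚ) (k : ℕ) (s : ℕ → ℚ) (n : ℕ) :
    (Polynomial.aeval shiftEnd
        (Polynomial.X ^ k - ∑ i ∈ Finset.range k, Polynomial.C (c i) * Polynomial.X ^ i)) s n
      = s (n + k) - ∑ i ∈ Finset.range k, c i * s (n + i) := by
  rw [map_sub, LinearMap.sub_apply, Pi.sub_apply, Polynomial.aeval_X_pow, shiftEnd_pow,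
    aeval_sum_apply]

lemma finite_of_tendsto_ne (F : ℕ → ℤ) (w : ℕ → ℝ) (L : ℝ) (hL : L ≠ 0)
    (h : Tendsto (fun n => (F n : ℝ) / w n) atTop (nhds L)) :
    {n : ℕ | F n = 0}.Finite := by
  have h2 : ∀ᶠ n in atTop, (F n : ℝ) / w n ≠ 0 := h.eventually_ne hL
  rw [← Nat.cofinite_eq_atTop, eventually_cofinite] at h2
  refine h2.subset fun n hn => ?_
  simp only [Set.mem_setOf_eq] at hn ⊢
  simp [hn]

lemma pow_ratio_tendsto (r : ℕ → ℕ) (hmono : StrictMono r) (θ : ℝ)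
    (hθ : Tendsto (fun n => (r (n + 1) : ℝ) / r n) atTop (nhds θ)) (i : ℕ) :
    Tendsto (fun n => (r (n + i) : ℝ) / r n) atTop (nhds (θ ^ i)) := by
  have hpos : ∀ m : ℕ, 1 ≤ m → (0 : ℝ) < r m := by
    intro m hm
    have h1 : m ≤ r m := hmono.le_apply
    have : 1 ≤ r m := le_trans hm h1
    exact_mod_cast this
  induction i with
  | zero =>
    rw [pow_zero]
    refine Tendsto.congr' ?_ tendsto_const_nhds
    filter_upwards [eventually_ge_atTop 1] with n hn
    rw [Nat.add_zero, div_self (ne_of_gt (hpos n hn))]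
  | succ j ih =>
    have hshift : Tendsto (fun n => (r (n + j + 1) : ℝ) / r (n + j)) atTop (nhds θ) := by
      have := hθ.comp (tendsto_add_atTop_nat j)
      exact this
    have h2 := hshift.mul ih
    rw [← pow_succ'] at h2
    refine Tendsto.congr' ?_ h2
    filter_upwards [eventually_ge_atTop 1] with n hn
    have h1 : (r (n + j) : ℝ) ≠ 0 := ne_of_gt (hpos _ (le_trans hn (Nat.le_add_right n j)))
    exact div_mul_div_cancel₀ h1

/-- for a regular sequence `r`, the zero set of any operator
`f(n) = a₀ r n + ⋯ + a_d r (n+d)` is finite or cofinite in `ℕ`. -/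
theorem operator_zeros_finite_or_cofinite_of_regular
    (r : ℕ → ℕ) (hr : IsRegularSequence r)
    (d : ℕ) (a : ℕ → ℤ) (had : a d ≠ 0) :
    {n : ℕ | (∑ i ∈ Finset.range (d + 1), a i * (r (n + i) : ℤ)) = 0}.Finite ∨
      {n : ℕ | (∑ i ∈ Finset.range (d + 1), a i * (r (n + i) : ℤ)) ≠ 0}.Finite := by
  obtain ⟨hmono, hcase⟩ := hr
  have hpos : ∀ m : ℕ, 1 ≤ m → (0 : ℝ) < r m := by
    intro m hm
    have h1 : m ≤ r m := hmono.le_apply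
    have : 1 ≤ r m := le_trans hm h1
    exact_mod_cast this
  rcases hcase with hA | ⟨θ, hθ1, hθ, halg⟩
  · -- ratios tend to infinity: the zero set is finite
    left
    refine finite_of_tendsto_ne _ (fun n => (r (n + d) : ℝ)) (a d : ℝ)
      (by exact_mod_cast had) ?_
    have key : ∀ i, i < d → Tendsto (fun n => (r (n + i) : ℝ) / r (n + d)) atTop (nhds 0) := by
      intro i hi
      have h1 : Tendsto (fun n => (r (n + d) : ℝ) / r (n + (d - 1))) atTop atTop := by
        have h := hA.comp (tendsto_add_atTop_nat (d - 1))
        refine Tendsto.congr (fun n => ?_) h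
        simp only [Function.comp_apply]
        rw [show n + (d - 1) + 1 = n + d from by omega]
      have h2 : Tendsto (fun n => (r (n + d) : ℝ) / r (n + i)) atTop atTop := by
        refine tendsto_atTop_mono' atTop ?_ h1
        filter_upwards [eventually_ge_atTop 1] with n hn
        refine div_le_div_of_nonneg_left (by positivity)
          (hpos _ (le_trans hn (Nat.le_add_right n i))) ?_
        exact_mod_cast hmono.monotone (show n + i ≤ n + (d - 1) by omega)
      have h3 := h2.inv_tendsto_atTop
      refine Tendsto.congr (fun n => ?_) h3
      simp [inv_div]
    have hlast : Tendsto (fun n => (a d : ℝ) * ((r (n + d) : ℝ) / r (n + d))) atTop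
        (nhds (a d : ℝ)) := by
      refine Tendsto.congr' ?_ tendsto_const_nhds
      filter_upwards [eventually_ge_atTop 1] with n hn
      rw [div_self (ne_of_gt (hpos _ (le_trans hn (Nat.le_add_right n d)))), mul_one]
    have hsum0 : Tendsto
        (fun n => ∑ i ∈ Finset.range d, (a i : ℝ) * ((r (n + i) : ℝ) / r (n + d)))
        atTop (nhds 0) := by
      have h := tendsto_finset_sum (Finset.range d)
        (fun i hi => (tendsto_const_nhds (x := (a i : ℝ))).mul (key i (Finset.mem_range.mp hi)))
      simpa using h
    have hmain := hsum0.add hlast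
    rw [zero_add] at hmain
    refine Tendsto.congr (fun n => ?_) hmain
    push_cast
    rw [Finset.sum_div, Finset.sum_range_succ]
    simp [mul_div_assoc]
  · -- ratios tend to θ
    have hpowi := pow_ratio_tendsto r hmono θ hθ
    set L : ℝ := ∑ i ∈ Finset.range (d + 1), (a i : ℝ) * θ ^ i with hLdef
    have hmain : Tendsto
        (fun n => ((∑ i ∈ Finset.range (d + 1), a i * (r (n + i) : ℤ) : ℤ) : ℝ) / r n)
        atTop (nhds L) := by
      have h := tendsto_finset_sum (Finset.range (d + 1))
        (fun i _ => (tendsto_const_nhds (x := (a i : ℝ))).mul (hpowi i))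
      refine Tendsto.congr (fun n => ?_) h
      push_cast
      rw [Finset.sum_div]
      exact Finset.sum_congr rfl fun i _ => (mul_div_assoc _ _ _).symm
    by_cases hL : L = 0
    · -- θ is algebraic and the operator vanishes identically
      right
      set P : Polynomial ℚ :=
        ∑ i ∈ Finset.range (d + 1), Polynomial.C ((a i : ℚ)) * Polynomial.X ^ i with hPdef
      have hcoeff : P.coeff d = (a d : ℚ) := by
        rw [hPdef, Polynomial.finset_sum_coeff]
        simp [Polynomial.coeff_C_mul, Polynomial.coeff_X_pow]
      have hPne : P ≠ 0 := by
        intro h0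
        rw [h0, Polynomial.coeff_zero] at hcoeff
        exact had (by exact_mod_cast hcoeff.symm)
      have hPθ : Polynomial.aeval θ P = 0 := by
        have h1 : Polynomial.aeval θ P = L := by
          rw [hPdef, map_sum, hLdef]
          refine Finset.sum_congr rfl fun i _ => ?_
          rw [map_mul, Polynomial.aeval_C, Polynomial.aeval_X_pow]
          norm_num
        rw [h1, hL]
      obtain ⟨k, hkpos, c, hrec, hminp⟩ := halg ⟨P, hPne, hPθ⟩
      have hdvd : minpoly ℚ θ ∣ P := minpoly.dvd ℚ θ hPθ
      rw [← hminp] at hdvd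
      obtain ⟨Q, hQ⟩ := hdvd
      have hms : (Polynomial.aeval shiftEnd
          (Polynomial.X ^ k - ∑ i ∈ Finset.range k, Polynomial.C ((c i : ℚ))
            * Polynomial.X ^ i)) (fun m => (r m : ℚ)) = 0 := by
        funext n
        rw [aeval_charpoly_apply]
        have h1 : (r (n + k) : ℚ) = ∑ i ∈ Finset.range k, (c i : ℚ) * (r (n + i) : ℚ) := by
          exact_mod_cast hrec n
        simp [h1]
      have hzero : ∀ n, (∑ i ∈ Finset.range (d + 1), a i * (r (n + i) : ℤ)) = 0 := by
        intro n
        have h1 : (Polynomial.aeval shiftEnd P) (fun m => (r m : ℚ)) n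
            = ∑ i ∈ Finset.range (d + 1), (a i : ℚ) * ((r (n + i) : ℚ)) := by
          rw [hPdef]; exact aeval_sum_apply _ _ _ _
        have h2 : (Polynomial.aeval shiftEnd P) (fun m => (r m : ℚ)) = 0 := by
          rw [hQ, mul_comm, map_mul, Module.End.mul_apply, hms, map_zero]
        have h3 : (∑ i ∈ Finset.range (d + 1), (a i : ℚ) * ((r (n + i) : ℚ))) = 0 := by
          rw [← h1, h2]; rfl
        exact_mod_cast h3
      have hempty : {n : ℕ | (∑ i ∈ Finset.range (d + 1), a i * (r (n + i) : ℤ)) ≠ 0} = ∅ := by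
        ext n
        simp [hzero n]
      rw [hempty]
      exact Set.finite_empty
    · left
      exact finite_of_tendsto_ne _ _ L hL hmain
end

section
/- Let R=(r_n) be a regular sequence, let f_1,…,f_s be operators on R, and let z ∈ ℤ. Then there exist finitely many tuples m̄_1,…,m̄_k ∈ ℤ^s such that for every non-degenerate solution (l_1,…,l_s) ∈ ℕ^s of the equation f_1(x_1)+⋯+f_s(x_s)=z, there is some i ∈ {1,…,k} with l_j = l_1 + m_{ij} for all j ∈ {1,…,s}. -/
open Filter

/-- `l` is a non-degenerate solution of `f₁(x₁) + ⋯ + f_s(x_s) = z`: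
the coordinates are pairwise distinct and every proper nonempty subsum of the
`fᵢ(lᵢ)` is nonzero. -/
def IsNondegenerateSolution {s : ℕ} (f : Fin s → ℕ → ℤ) (z : ℤ) (l : Fin s → ℕ) : Prop :=
  (∑ j, f j (l j)) = z ∧
  (∀ i j, i ≠ j → l i ≠ l j) ∧
  ∀ I : Finset (Fin s), I.Nonempty → I ≠ Finset.univ → (∑ i ∈ I, f i (l i)) ≠ 0


section Aux
open Polynomial Finset Filter

noncomputable def app (r : ℕ → ℕ) (P : Polynomial ℤ) (n : ℕ) : ℤ :=
  ∑ m ∈ Finset.range (P.natDegree + 1), P.coeff m * (r (n + m) : ℤ)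

lemma app_eq_sum_range (r : ℕ → ℕ) (P : Polynomial ℤ) (n M : ℕ) (h : P.natDegree < M) :
    app r P n = ∑ m ∈ Finset.range M, P.coeff m * (r (n + m) : ℤ) := by
  apply Finset.sum_subset
  · exact Finset.range_subset_range.2 h
  · intro x _ hx
    rw [Finset.mem_range, not_lt] at hx
    rw [P.coeff_eq_zero_of_natDegree_lt (by omega), zero_mul]

lemma app_zero (r : ℕ → ℕ) (n : ℕ) : app r 0 n = 0 := by
  simp [app]

lemma app_add (r : ℕ → ℕ) (P Q : Polynomial ℤ) (n : ℕ) :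
    app r (P + Q) n = app r P n + app r Q n := by
  set M := max (max P.natDegree Q.natDegree) (P + Q).natDegree + 1 with hM
  rw [app_eq_sum_range r P n M (by omega), app_eq_sum_range r Q n M (by omega),
    app_eq_sum_range r (P + Q) n M (by omega), ← Finset.sum_add_distrib]
  exact Finset.sum_congr rfl fun m _ => by rw [coeff_add, add_mul]

lemma app_monomial_mul (r : ℕ → ℕ) (j : ℕ) (a : ℤ) (P : Polynomial ℤ) (n : ℕ) :
    app r (monomial j a * P) n = a * app r P (n + j) := by
  have hdeg : (monomial j a * P).natDegree < j + (P.natDegree + 1) := by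
    calc (monomial j a * P).natDegree ≤ (monomial j a).natDegree + P.natDegree :=
          natDegree_mul_le
      _ ≤ j + P.natDegree := by
          have := natDegree_monomial_le (a := a) (m := j); omega
      _ < j + (P.natDegree + 1) := by omega
  rw [app_eq_sum_range r _ n _ hdeg, Finset.sum_range_add]
  have hmon : monomial j a * P = X ^ j * (C a * P) := by
    rw [← mul_assoc, X_pow_mul, ← C_mul_X_pow_eq_monomial]
  have h1 : ∑ m ∈ Finset.range j, (monomial j a * P).coeff m * (r (n + m) : ℤ) = 0 := by
    apply Finset.sum_eq_zero
    intro m hm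
    rw [Finset.mem_range] at hm
    rw [hmon, coeff_X_pow_mul' , if_neg (by omega), zero_mul]
  rw [h1, zero_add, app, Finset.mul_sum]
  apply Finset.sum_congr rfl
  intro m _
  rw [hmon, add_comm j m, coeff_X_pow_mul, coeff_C_mul]
  ring_nf

lemma app_sum (r : ℕ → ℕ) {ι : Type*} (I : Finset ι) (Q : ι → Polynomial ℤ) (n : ℕ) :
    app r (∑ j ∈ I, Q j) n = ∑ j ∈ I, app r (Q j) n := by
  classical
  induction I using Finset.induction_on with
  | empty => simp [app_zero]
  | insert _ _ h ih => rw [Finset.sum_insert h, Finset.sum_insert h, app_add, ih]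

lemma app_mul_zero (r : ℕ → ℕ) (P : Polynomial ℤ) (hP : ∀ n, app r P n = 0)
    (q : Polynomial ℤ) : ∀ n, app r (q * P) n = 0 := by
  induction q using Polynomial.induction_on' with
  | add p q hp hq => intro n; rw [add_mul, app_add, hp, hq, add_zero]
  | monomial j a => intro n; rw [app_monomial_mul, hP, mul_zero]

lemma app_sum_C_mul_X_pow (r : ℕ → ℕ) (d : ℕ) (a : ℕ → ℤ) (n : ℕ) :
    app r (∑ k ∈ Finset.range (d + 1), C (a k) * X ^ k) n
      = ∑ k ∈ Finset.range (d + 1), a k * (r (n + k) : ℤ) := by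
  rw [app_eq_sum_range r _ n (d + 1)]
  · apply Finset.sum_congr rfl
    intro m hm
    rw [Finset.mem_range] at hm
    congr 1
    rw [finset_sum_coeff]
    rw [Finset.sum_eq_single m]
    · rw [coeff_C_mul_X_pow, if_pos rfl]
    · intro b _ hb; rw [coeff_C_mul_X_pow, if_neg (fun h => hb h.symm)]
    · intro h; exact absurd (Finset.mem_range.2 hm) h
  · calc (∑ k ∈ Finset.range (d + 1), C (a k) * X ^ k).natDegree
        ≤ Finset.fold max 0 (fun k => (C (a k) * X ^ k).natDegree) (Finset.range (d+1)) :=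
          natDegree_sum_le _ _
      _ ≤ d := by
          rw [Finset.fold_max_le]
          constructor
          · omega
          · intro k hk
            rw [Finset.mem_range] at hk
            calc (C (a k) * X ^ k).natDegree ≤ (C (a k)).natDegree + (X ^ k : Polynomial ℤ).natDegree := natDegree_mul_le
              _ ≤ 0 + k := by
                  have h1 : (C (a k)).natDegree = 0 := natDegree_C _
                  have h2 : (X ^ k : Polynomial ℤ).natDegree ≤ k := natDegree_X_pow_le k
                  omega
              _ ≤ d := by omega
      _ < d + 1 := by omega

lemma app_abs_le (r : ℕ → ℕ) (hmono : StrictMono r) (P : Polynomial ℤ) (n : ℕ) :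
    |app r P n| ≤ (∑ m ∈ Finset.range (P.natDegree + 1), |P.coeff m|) * (r (n + P.natDegree) : ℤ) := by
  calc |app r P n| ≤ ∑ m ∈ Finset.range (P.natDegree + 1), |P.coeff m * (r (n + m) : ℤ)| :=
        Finset.abs_sum_le_sum_abs _ _
    _ ≤ ∑ m ∈ Finset.range (P.natDegree + 1), |P.coeff m| * (r (n + P.natDegree) : ℤ) := by
        apply Finset.sum_le_sum
        intro m hm
        rw [Finset.mem_range] at hm
        rw [abs_mul, abs_of_nonneg (by positivity : (0:ℤ) ≤ (r (n+m) : ℤ))]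
        apply mul_le_mul_of_nonneg_left _ (abs_nonneg _)
        exact_mod_cast hmono.monotone (by omega)
    _ = _ := by rw [Finset.sum_mul]

lemma charpoly_deg_aux (k : ℕ) (c : ℕ → ℤ) :
    (∑ i ∈ Finset.range k, C (c i) * X ^ i : Polynomial ℤ).degree < (k : WithBot ℕ) := by
  apply lt_of_le_of_lt (degree_sum_le _ _)
  rw [Finset.sup_lt_iff (by exact_mod_cast WithBot.bot_lt_coe k)]
  intro i hi
  rw [Finset.mem_range] at hi
  exact lt_of_le_of_lt (degree_C_mul_X_pow_le _ _) (by exact_mod_cast hi)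

lemma charpoly_monic (k : ℕ) (hk : 0 < k) (c : ℕ → ℤ) :
    (X ^ k - ∑ i ∈ Finset.range k, C (c i) * X ^ i : Polynomial ℤ).Monic :=
  monic_X_pow_sub (charpoly_deg_aux k c)

lemma charpoly_degree (k : ℕ) (c : ℕ → ℤ) :
    (X ^ k - ∑ i ∈ Finset.range k, C (c i) * X ^ i : Polynomial ℤ).degree = k := by
  rw [degree_sub_eq_left_of_degree_lt (by rw [degree_X_pow]; exact charpoly_deg_aux k c),
    degree_X_pow]

lemma charpoly_coeff (k : ℕ) (c : ℕ → ℤ) (m : ℕ) (hm : m < k) :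
    (X ^ k - ∑ i ∈ Finset.range k, C (c i) * X ^ i : Polynomial ℤ).coeff m = -(c m) := by
  rw [coeff_sub, coeff_X_pow, if_neg (by omega), finset_sum_coeff]
  rw [Finset.sum_eq_single m]
  · rw [coeff_C_mul_X_pow, if_pos rfl, zero_sub]
  · intro b _ hb; rw [coeff_C_mul_X_pow, if_neg (fun h => hb h.symm)]
  · intro h; exact absurd (Finset.mem_range.2 hm) h

lemma charpoly_coeff_k (k : ℕ) (c : ℕ → ℤ) :
    (X ^ k - ∑ i ∈ Finset.range k, C (c i) * X ^ i : Polynomial ℤ).coeff k = 1 := by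
  rw [coeff_sub, coeff_X_pow, if_pos rfl, finset_sum_coeff]
  rw [Finset.sum_eq_zero, sub_zero]
  intro b hb
  rw [Finset.mem_range] at hb
  rw [coeff_C_mul_X_pow, if_neg (by omega)]

lemma charpoly_natDegree (k : ℕ) (hk : 0 < k) (c : ℕ → ℤ) :
    (X ^ k - ∑ i ∈ Finset.range k, C (c i) * X ^ i : Polynomial ℤ).natDegree = k := by
  exact natDegree_eq_of_degree_eq_some (charpoly_degree k c)

lemma app_charpoly_zero (r : ℕ → ℕ) (k : ℕ) (hk : 0 < k) (c : ℕ → ℤ)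
    (hrec : ∀ n : ℕ, (r (n + k) : ℤ) = ∑ i ∈ Finset.range k, c i * r (n + i)) (n : ℕ) :
    app r (X ^ k - ∑ i ∈ Finset.range k, C (c i) * X ^ i) n = 0 := by
  rw [app_eq_sum_range r _ n (k + 1) (by rw [charpoly_natDegree k hk c]; omega)]
  rw [Finset.sum_range_succ, charpoly_coeff_k, one_mul]
  rw [Finset.sum_congr rfl (fun m hm => by
    rw [charpoly_coeff k c m (Finset.mem_range.1 hm)])]
  have : ∑ m ∈ Finset.range k, -(c m) * (r (n + m) : ℤ)
      = -∑ m ∈ Finset.range k, c m * (r (n + m) : ℤ) := by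
    rw [← Finset.sum_neg_distrib]; apply Finset.sum_congr rfl; intro m _; ring
  rw [this, ← hrec n]
  ring


lemma r_pos (r : ℕ → ℕ) (hmono : StrictMono r) (n : ℕ) (hn : 1 ≤ n) : 1 ≤ r n :=
  le_trans hn hmono.le_apply

lemma ratio_bound (r : ℕ → ℕ) (hr : IsRegularSequence r) :
    ∃ ρ : ℝ, 1 < ρ ∧ ∃ N : ℕ, 1 ≤ N ∧ ∀ n, N ≤ n → ρ * r n ≤ r (n + 1) := by
  obtain ⟨hmono, H⟩ := hr
  have key : ∃ ρ : ℝ, 1 < ρ ∧ ∀ᶠ n in atTop, ρ ≤ (r (n + 1) : ℝ) / r n := by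
    rcases H with Hinf | ⟨θ, hθ1, hθ, -⟩
    · exact ⟨2, one_lt_two, Hinf.eventually_ge_atTop 2⟩
    · refine ⟨(1 + θ) / 2, by linarith, hθ.eventually (eventually_ge_nhds (by linarith))⟩
  obtain ⟨ρ, hρ1, hev⟩ := key
  obtain ⟨N0, hN0⟩ := eventually_atTop.1 hev
  refine ⟨ρ, hρ1, N0 + 1, by omega, fun n hn => ?_⟩
  have hpos : (0 : ℝ) < r n := by
    have := r_pos r hmono n (by omega); exact_mod_cast this
  have := hN0 n (by omega)
  calc ρ * r n ≤ ((r (n + 1) : ℝ) / r n) * r n := by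
        apply mul_le_mul_of_nonneg_right this hpos.le
    _ = r (n + 1) := div_mul_cancel₀ _ hpos.ne'

lemma ratio_pow_s5 (r : ℕ → ℕ) (ρ : ℝ) (hρ : 1 < ρ) (N : ℕ)
    (h : ∀ n, N ≤ n → ρ * r n ≤ r (n + 1)) :
    ∀ n, N ≤ n → ∀ m, ρ ^ m * r n ≤ r (n + m) := by
  intro n hn m
  induction m with
  | zero => simp
  | succ m ih =>
      have h1 : ρ * (ρ ^ m * r n) ≤ ρ * r (n + m) :=
        mul_le_mul_of_nonneg_left ih (by linarith)
      have h2 : ρ * r (n + m) ≤ r (n + m + 1) := h (n + m) (by omega)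
      calc ρ ^ (m + 1) * r n = ρ * (ρ ^ m * r n) := by ring
        _ ≤ r (n + (m + 1)) := by rw [show n + (m+1) = n + m + 1 from rfl]; linarith

lemma ratio_lim_pow (r : ℕ → ℕ) (hmono : StrictMono r) (θ : ℝ)
    (hθ : Tendsto (fun n => (r (n + 1) : ℝ) / r n) atTop (nhds θ)) (m : ℕ) :
    Tendsto (fun n => (r (n + m) : ℝ) / r n) atTop (nhds (θ ^ m)) := by
  induction m with
  | zero =>
      simp only [add_zero, pow_zero]
      apply Tendsto.congr' _ tendsto_const_nhds
      filter_upwards [eventually_ge_atTop 1] with n hn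
      have : (0:ℝ) < r n := by exact_mod_cast r_pos r hmono n hn
      rw [div_self this.ne']
  | succ m ih =>
      have h1 : Tendsto (fun n => (r (n + m + 1) : ℝ) / r (n + m)) atTop (nhds θ) :=
        hθ.comp (tendsto_add_atTop_nat m)
      have := (h1.mul ih)
      rw [show θ * θ ^ m = θ ^ (m + 1) by ring] at this
      apply Tendsto.congr' _ this
      filter_upwards [eventually_ge_atTop 1] with n hn
      have h2 : (0:ℝ) < r (n + m) := by
        have := r_pos r hmono (n + m) (by omega); exact_mod_cast this
      have h3 : (0:ℝ) < r n := by exact_mod_cast r_pos r hmono n hn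
      field_simp
      ring


lemma growth_dichotomy (r : ℕ → ℕ) (hr : IsRegularSequence r) (P : Polynomial ℤ) :
    (∀ n, app r P n = 0) ∨
      ∃ ε : ℝ, 0 < ε ∧ ∃ N : ℕ, ∀ n, N ≤ n → ε * r n ≤ |(app r P n : ℝ)| := by
  classical
  by_cases hP : P = 0
  · left; intro n; simp [hP, app]
  obtain ⟨hmono, H⟩ := hr
  rcases H with Hinf | ⟨θ, hθ1, hθ, halg⟩
  · -- ratios tend to infinity
    right
    set d := P.natDegree with hd
    have hlead : P.coeff d ≠ 0 := fun h => hP (Polynomial.leadingCoeff_eq_zero.1 h)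
    have hlead1 : 1 ≤ |P.coeff d| := by
      have := abs_pos.2 hlead; omega
    rcases Nat.eq_zero_or_pos d with hd0 | hdpos
    · -- degree 0
      refine ⟨1, one_pos, 0, fun n _ => ?_⟩
      have : app r P n = P.coeff 0 * r n := by
        rw [app, show P.natDegree = 0 by rw [← hd, hd0]]; simp
      rw [this]
      have : (1 : ℤ) * r n ≤ |P.coeff 0 * (r n : ℤ)| := by
        rw [abs_mul, abs_of_nonneg (by positivity : (0:ℤ) ≤ (r n : ℤ))]
        apply mul_le_mul_of_nonneg_right _ (by positivity)
        rw [← hd0]; exact hlead1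
      calc (1:ℝ) * r n = ((1 * r n : ℤ) : ℝ) := by push_cast; ring
        _ ≤ |((P.coeff 0 * r n : ℤ) : ℝ)| := by rw [← Int.cast_abs]; exact_mod_cast this
    · -- degree ≥ 1
      set C0 : ℤ := ∑ m ∈ Finset.range d, |P.coeff m| with hC0
      have hC0nn : 0 ≤ C0 := Finset.sum_nonneg fun m _ => abs_nonneg _
      -- eventually r (n+1) ≥ (2*C0+2) * r n
      have hev : ∀ᶠ n in atTop, ((2 * C0 + 2 : ℤ) : ℝ) ≤ (r (n + 1) : ℝ) / r n :=
        Hinf.eventually_ge_atTop _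
      obtain ⟨N1, hN1⟩ := eventually_atTop.1 hev
      refine ⟨1, one_pos, N1 + 1, fun n hn => ?_⟩
      -- integer bound
      have hr1 : (1 : ℤ) ≤ r (n + d - 1) := by
        exact_mod_cast r_pos r hmono _ (by omega)
      have hstep : (2 * C0 + 2) * (r (n + d - 1) : ℤ) ≤ r (n + d) := by
        have h1 := hN1 (n + d - 1) (by omega)
        have hpos : (0 : ℝ) < r (n + d - 1) := by exact_mod_cast hr1
        have h2 : ((2 * C0 + 2 : ℤ) : ℝ) * r (n + d - 1) ≤ r (n + d - 1 + 1) := by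
          calc ((2 * C0 + 2 : ℤ) : ℝ) * r (n + d - 1)
              ≤ ((r (n + d - 1 + 1) : ℝ) / r (n + d - 1)) * r (n + d - 1) :=
                mul_le_mul_of_nonneg_right h1 hpos.le
            _ = r (n + d - 1 + 1) := div_mul_cancel₀ _ hpos.ne'
        have : n + d - 1 + 1 = n + d := by omega
        rw [this] at h2
        exact_mod_cast h2
      have hsplit : app r P n
          = (∑ m ∈ Finset.range d, P.coeff m * (r (n + m) : ℤ)) + P.coeff d * r (n + d) := by
        rw [app, Finset.sum_range_succ]
      have hlower : |∑ m ∈ Finset.range d, P.coeff m * (r (n + m) : ℤ)| ≤ C0 * r (n + d - 1) := by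
        calc |∑ m ∈ Finset.range d, P.coeff m * (r (n + m) : ℤ)|
            ≤ ∑ m ∈ Finset.range d, |P.coeff m * (r (n + m) : ℤ)| :=
              Finset.abs_sum_le_sum_abs _ _
          _ ≤ ∑ m ∈ Finset.range d, |P.coeff m| * (r (n + d - 1) : ℤ) := by
              apply Finset.sum_le_sum
              intro m hm
              rw [Finset.mem_range] at hm
              rw [abs_mul, abs_of_nonneg (by positivity : (0:ℤ) ≤ (r (n+m) : ℤ))]
              apply mul_le_mul_of_nonneg_left _ (abs_nonneg _)
              exact_mod_cast hmono.monotone (by omega)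
          _ = C0 * r (n + d - 1) := by rw [hC0, Finset.sum_mul]
      have htop : (r (n + d) : ℤ) ≤ |P.coeff d * r (n + d)| := by
        rw [abs_mul, abs_of_nonneg (by positivity : (0:ℤ) ≤ (r (n+d) : ℤ))]
        exact le_mul_of_one_le_left (by positivity) hlead1
      have hkey : (r n : ℤ) ≤ |app r P n| := by
        have h3 : |P.coeff d * (r (n + d) : ℤ)| - |∑ m ∈ Finset.range d, P.coeff m * (r (n + m) : ℤ)|
            ≤ |app r P n| := by
          rw [hsplit]
          have := abs_add_le (∑ m ∈ Finset.range d, P.coeff m * (r (n + m) : ℤ)) (P.coeff d * r (n + d))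
          have h4 := abs_sub_abs_le_abs_sub (P.coeff d * (r (n+d) : ℤ))
            (-(∑ m ∈ Finset.range d, P.coeff m * (r (n + m) : ℤ)))
          rw [abs_neg, sub_neg_eq_add] at h4
          calc |P.coeff d * (r (n + d) : ℤ)| - |∑ m ∈ Finset.range d, P.coeff m * (r (n + m) : ℤ)|
              ≤ |P.coeff d * (r (n+d):ℤ) + (∑ m ∈ Finset.range d, P.coeff m * (r (n + m) : ℤ))| := h4
            _ = _ := by rw [add_comm]
        have h5 : (r n : ℤ) ≤ r (n + d - 1) := by
          exact_mod_cast hmono.monotone (by omega : n ≤ n + d - 1)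
        nlinarith [hstep, hlower, htop, hr1]
      calc (1:ℝ) * r n = ((r n : ℤ) : ℝ) := by push_cast; ring
        _ ≤ |((app r P n : ℤ) : ℝ)| := by rw [← Int.cast_abs]; exact_mod_cast hkey
  · -- ratios tend to θ
    set S : ℝ := ∑ m ∈ Finset.range (P.natDegree + 1), (P.coeff m : ℝ) * θ ^ m with hS
    have happ : Tendsto (fun n => (app r P n : ℝ) / r n) atTop (nhds S) := by
      have h1 : Tendsto (fun n => ∑ m ∈ Finset.range (P.natDegree + 1),
          (P.coeff m : ℝ) * ((r (n + m) : ℝ) / r n)) atTop (nhds S) := by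
        rw [hS]
        apply tendsto_finset_sum
        intro m _
        exact (ratio_lim_pow r hmono θ hθ m).const_mul _
      apply Tendsto.congr' _ h1
      filter_upwards [eventually_ge_atTop 1] with n hn
      have hpos : (0:ℝ) < r n := by exact_mod_cast r_pos r hmono n hn
      rw [app]
      push_cast
      rw [Finset.sum_div]
      apply Finset.sum_congr rfl
      intro m _
      ring
    by_cases hSz : S = 0
    · -- S = 0 : θ is algebraic, use recurrence to show app ≡ 0
      left
      have haevalP : (Polynomial.aeval θ) (P.map (Int.castRingHom ℚ)) = 0 := by
        rw [show (Int.castRingHom ℚ) = algebraMap ℤ ℚ from rfl, aeval_map_algebraMap]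
        rw [Polynomial.aeval_def, eval₂_eq_sum_range]
        simpa using hSz
      have hPQne : P.map (Int.castRingHom ℚ) ≠ 0 := fun h =>
        hP (Polynomial.map_injective _ Int.cast_injective (by rw [h, Polynomial.map_zero]))
      have θalg : IsAlgebraic ℚ θ := ⟨P.map (Int.castRingHom ℚ), hPQne, haevalP⟩
      obtain ⟨k, hk, c, hrec, hchar⟩ := halg θalg
      set pI : Polynomial ℤ := X ^ k - ∑ i ∈ Finset.range k, C (c i) * X ^ i with hpI
      have hmapp : pI.map (Int.castRingHom ℚ) = minpoly ℚ θ := by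
        rw [hpI, ← hchar]
        push_cast [Polynomial.map_sub, Polynomial.map_pow, Polynomial.map_X,
          Polynomial.map_sum, Polynomial.map_mul, Polynomial.map_C]
        rfl
      have hmonic : pI.Monic := charpoly_monic k hk c
      have hdvd : minpoly ℚ θ ∣ P.map (Int.castRingHom ℚ) := minpoly.dvd ℚ θ haevalP
      -- show remainder is zero
      have hdiv : P %ₘ pI + pI * (P /ₘ pI) = P := modByMonic_add_div P pI
      have e0 : P %ₘ pI = P - pI * (P /ₘ pI) := eq_sub_of_add_eq hdiv
      have hmapρ : (P %ₘ pI).map (Int.castRingHom ℚ)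
          = P.map (Int.castRingHom ℚ) - (minpoly ℚ θ) * ((P /ₘ pI).map (Int.castRingHom ℚ)) := by
        rw [e0, Polynomial.map_sub, Polynomial.map_mul, hmapp]
      have hdvdρ : minpoly ℚ θ ∣ (P %ₘ pI).map (Int.castRingHom ℚ) := by
        rw [hmapρ]
        exact dvd_sub hdvd (Dvd.intro _ rfl)
      have hdegρ : ((P %ₘ pI).map (Int.castRingHom ℚ)).degree < (minpoly ℚ θ).degree := by
        calc ((P %ₘ pI).map (Int.castRingHom ℚ)).degree ≤ (P %ₘ pI).degree := degree_map_le
          _ < pI.degree := degree_modByMonic_lt P hmonic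
          _ = (pI.map (Int.castRingHom ℚ)).degree := (hmonic.degree_map _).symm
          _ = (minpoly ℚ θ).degree := by rw [hmapp]
      have hρ0z : P %ₘ pI = 0 := by
        have := eq_zero_of_dvd_of_degree_lt hdvdρ hdegρ
        exact Polynomial.map_injective _ Int.cast_injective (by rw [this, Polynomial.map_zero])
      have hfact : P = (P /ₘ pI) * pI := by
        rw [mul_comm]
        conv_lhs => rw [← hdiv]
        rw [hρ0z, zero_add]
      intro n
      rw [hfact]
      exact app_mul_zero r pI (app_charpoly_zero r k hk c hrec) (P /ₘ pI) n
    · -- S ≠ 0 : growth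
      right
      refine ⟨|S| / 2, by positivity, ?_⟩
      have habs : Tendsto (fun n => |(app r P n : ℝ) / r n|) atTop (nhds |S|) := happ.abs
      have hev : ∀ᶠ n in atTop, |S| / 2 ≤ |(app r P n : ℝ) / r n| :=
        habs.eventually (eventually_ge_nhds (half_lt_self (abs_pos.2 hSz)))
      obtain ⟨N2, hN2⟩ := eventually_atTop.1 hev
      refine ⟨N2 + 1, fun n hn => ?_⟩
      have hpos : (0:ℝ) < r n := by exact_mod_cast r_pos r hmono n (by omega)
      have h1 := hN2 n (by omega)
      rw [abs_div, abs_of_pos hpos] at h1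
      calc |S| / 2 * r n ≤ (|(app r P n : ℝ)| / r n) * r n :=
            mul_le_mul_of_nonneg_right h1 hpos.le
        _ = |(app r P n : ℝ)| := div_mul_cancel₀ _ hpos.ne'

end Aux

/-- for a regular sequence `r`, operators `f₁, …, f_s` on `r` and
`z ∈ ℤ`, there are finitely many tuples `m̄₁, …, m̄_k ∈ ℤ^s` such that every
non-degenerate solution `(l₁, …, l_s)` of `f₁(x₁) + ⋯ + f_s(x_s) = z` satisfies
`l_j = l₁ + m_{ij}` for some `i`. -/
theorem nondegenerate_solutions_structure
    (r : ℕ → ℕ) (hr : IsRegularSequence r) (s : ℕ) (hs : 0 < s)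
    (f : Fin s → ℕ → ℤ)
    (hf : ∀ j : Fin s, ∃ d : ℕ, ∃ a : ℕ → ℤ, a d ≠ 0 ∧
      ∀ n : ℕ, f j n = ∑ i ∈ Finset.range (d + 1), a i * (r (n + i) : ℤ))
    (z : ℤ) :
    ∃ k : ℕ, ∃ m : Fin k → Fin s → ℤ,
      ∀ l : Fin s → ℕ, IsNondegenerateSolution f z l →
        ∃ i : Fin k, ∀ j : Fin s, (l j : ℤ) = (l ⟨0, hs⟩ : ℤ) + m i j := by
  classical
  have hmono : StrictMono r := hr.1
  have : Nonempty (Fin s) := ⟨⟨0, hs⟩⟩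
  choose d a hane hfa using hf
  set A : Fin s → Polynomial ℤ :=
    fun j => ∑ k ∈ Finset.range (d j + 1), Polynomial.C (a j k) * Polynomial.X ^ k with hA
  have hfapp : ∀ j n, f j n = app r (A j) n := fun j n => by
    rw [hfa j n, hA]; exact (app_sum_C_mul_X_pow r (d j) (a j) n).symm
  set D : ℕ := Finset.univ.sup d with hD
  have hdD : ∀ j, d j ≤ D := fun j => Finset.le_sup (Finset.mem_univ j)
  have hAdeg : ∀ j, (A j).natDegree < d j + 1 := by
    intro j
    have h1 : (A j).natDegree
        ≤ Finset.fold max 0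
            (fun k => (Polynomial.C (a j k) * Polynomial.X ^ k).natDegree)
            (Finset.range (d j + 1)) := Polynomial.natDegree_sum_le _ _
    have h2 : Finset.fold max 0
        (fun k => (Polynomial.C (a j k) * Polynomial.X ^ k).natDegree)
        (Finset.range (d j + 1)) ≤ d j := by
      rw [Finset.fold_max_le]
      refine ⟨by omega, fun k hk => ?_⟩
      rw [Finset.mem_range] at hk
      calc (Polynomial.C (a j k) * Polynomial.X ^ k).natDegree
          ≤ (Polynomial.C (a j k)).natDegree + (Polynomial.X ^ k : Polynomial ℤ).natDegree :=
            Polynomial.natDegree_mul_le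
        _ ≤ d j := by
            have h1 : (Polynomial.C (a j k)).natDegree = 0 := Polynomial.natDegree_C _
            have h2 : (Polynomial.X ^ k : Polynomial ℤ).natDegree ≤ k :=
              Polynomial.natDegree_X_pow_le k
            omega
    omega
  set Cb : ℤ := ∑ j : Fin s, ∑ m ∈ Finset.range ((A j).natDegree + 1), |(A j).coeff m| with hCb
  have hCbnn : 0 ≤ Cb :=
    Finset.sum_nonneg fun j _ => Finset.sum_nonneg fun m _ => abs_nonneg _
  have hfbound : ∀ j n, |f j n| ≤
      (∑ m ∈ Finset.range ((A j).natDegree + 1), |(A j).coeff m|) * (r (n + D) : ℤ) := by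
    intro j n
    rw [hfapp j n]
    calc |app r (A j) n|
        ≤ (∑ m ∈ Finset.range ((A j).natDegree + 1), |(A j).coeff m|) * (r (n + (A j).natDegree) : ℤ) :=
          app_abs_le r hmono (A j) n
      _ ≤ _ := by
          apply mul_le_mul_of_nonneg_left _ (Finset.sum_nonneg fun m _ => abs_nonneg _)
          have := hAdeg j
          have := hdD j
          exact_mod_cast hmono.monotone (by omega : n + (A j).natDegree ≤ n + D)
  obtain ⟨ρ, hρ1, Nρ, hNρ1, hNρ⟩ := ratio_bound r hr
  -- main inductive claim
  have main : ∀ t : ℕ, ∃ G : ℕ, ∀ l, IsNondegenerateSolution f z l →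
      ∀ i : Fin s, (Finset.univ.filter (fun j => l i < l j)).card < t →
        Finset.univ.sup l ≤ l i + G := by
    intro t
    induction t with
    | zero => exact ⟨0, fun l _ i h => absurd h (by omega)⟩
    | succ t ih =>
      obtain ⟨G, hG⟩ := ih
      -- pattern space
      set Pat := Finset (Fin s) × (Fin s → Fin (G + 1)) with hPat
      set B : Pat → Polynomial ℤ :=
        fun p => ∑ j ∈ p.1, Polynomial.monomial (G - (p.2 j : ℕ)) (1 : ℤ) * A j with hB
      have hsel : ∀ p : Pat, ∃ ε : ℝ, ∃ Np Mp : ℕ, (¬ (∀ n, app r (B p) n = 0)) →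
          (0 < ε ∧ (∀ n, Np ≤ n → ε * r n ≤ |(app r (B p) n : ℝ)|) ∧
            ((|z| : ℝ) + Cb < ε * ρ ^ Mp)) := by
        intro p
        rcases growth_dichotomy r hr (B p) with h0 | ⟨ε, hε, N, hN⟩
        · exact ⟨1, 0, 0, fun hc => absurd h0 hc⟩
        · obtain ⟨M, hM⟩ := pow_unbounded_of_one_lt (((|z| : ℤ) : ℝ) / ε + (Cb : ℝ) / ε) hρ1
          refine ⟨ε, N, M, fun _ => ⟨hε, hN, ?_⟩⟩
          have : ((|z| : ℤ) : ℝ) / ε + (Cb : ℝ) / ε = ((|z| : ℤ) + (Cb:ℝ)) / ε := by ring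
          rw [this, div_lt_iff₀ hε, mul_comm] at hM
          exact_mod_cast hM
      choose ε Np Mp hsel using hsel
      set NM : ℕ := Finset.univ.sup (fun p : Pat => Np p + Mp p) with hNM
      refine ⟨G + D + Nρ + NM, ?_⟩
      intro l hl i hcard
      obtain ⟨hsum, hinj, hnd⟩ := hl
      set L := Finset.univ.sup l with hL
      have hLmax : ∀ j, l j ≤ L := fun j => Finset.le_sup (Finset.mem_univ j)
      by_cases hct : (Finset.univ.filter (fun j => l i < l j)).card < t
      · have := hG l ⟨hsum, hinj, hnd⟩ i hct; omega
      have hceq : (Finset.univ.filter (fun j => l i < l j)).card = t := by omega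
      rcases Nat.eq_zero_or_pos t with ht0 | htpos
      · -- i is the max
        have hempty : Finset.univ.filter (fun j => l i < l j) = ∅ :=
          Finset.card_eq_zero.1 (by omega)
        obtain ⟨j0, -, hj0⟩ := Finset.exists_mem_eq_sup Finset.univ Finset.univ_nonempty l
        have hnot : ¬ (l i < l j0) := fun hlt =>
          (Finset.notMem_empty j0) (hempty ▸ Finset.mem_filter.2 ⟨Finset.mem_univ _, hlt⟩)
        have : L ≤ l i := by rw [hL, hj0]; omega
        omega
      -- t ≥ 1
      set I := Finset.univ.filter (fun j => l i < l j) with hI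
      have hiI : i ∉ I := by rw [hI]; simp
      have hInon : I.Nonempty := Finset.card_pos.1 (by omega)
      have hIne : I ≠ Finset.univ := fun h => hiI (h ▸ Finset.mem_univ i)
      have hIG : ∀ j ∈ I, L ≤ l j + G := by
        intro j hj
        apply hG l ⟨hsum, hinj, hnd⟩ j
        have hsub : Finset.univ.filter (fun j' => l j < l j') ⊆ I.erase j := by
          intro j' hj'
          rw [Finset.mem_filter] at hj'
          have hlij : l i < l j := by
            have hj2 := hj
            rw [hI] at hj2
            exact (Finset.mem_filter.1 hj2).2
          refine Finset.mem_erase.2 ⟨?_, Finset.mem_filter.2 ⟨Finset.mem_univ _, by omega⟩⟩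
          intro h; rw [h] at hj'; omega
        have := Finset.card_le_card hsub
        have := Finset.card_erase_of_mem hj
        omega
      by_cases hLG : L ≤ G + D + Nρ + NM
      · omega
      -- now L > G in particular
      have hGL : G ≤ L := by omega
      set p : Pat := ⟨I, fun j => ⟨min (L - l j) G, by omega⟩⟩ with hp
      set n₀ := L - G with hn₀
      have key : app r (B p) n₀ = ∑ j ∈ I, f j (l j) := by
        rw [hB, app_sum]
        apply Finset.sum_congr rfl
        intro j hj
        rw [app_monomial_mul, one_mul, ← hfapp]
        congr 1
        have h1 : L ≤ l j + G := hIG j hj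
        have h2 : l j ≤ L := hLmax j
        simp only [hp]
        omega
      have hne0 : app r (B p) n₀ ≠ 0 := by rw [key]; exact hnd I hInon hIne
      obtain ⟨hε, hNp, hMp⟩ := hsel p (fun h => hne0 (h n₀))
      -- rest bound
      have hrest : app r (B p) n₀ = z - ∑ j ∈ Iᶜ, f j (l j) := by
        rw [key]
        have := Finset.sum_add_sum_compl I (fun j => f j (l j))
        rw [hsum] at this
        omega
      have hRb : |∑ j ∈ Iᶜ, f j (l j)| ≤ Cb * r (l i + D) := by
        calc |∑ j ∈ Iᶜ, f j (l j)| ≤ ∑ j ∈ Iᶜ, |f j (l j)| := Finset.abs_sum_le_sum_abs _ _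
          _ ≤ ∑ j ∈ Iᶜ, (∑ m ∈ Finset.range ((A j).natDegree + 1), |(A j).coeff m|) * (r (l i + D) : ℤ) := by
              apply Finset.sum_le_sum
              intro j hj
              have hji : l j ≤ l i := by
                have : j ∉ I := Finset.mem_compl.1 hj
                rw [hI] at this; simp at this; omega
              calc |f j (l j)| ≤ (∑ m ∈ Finset.range ((A j).natDegree + 1), |(A j).coeff m|) * (r (l j + D) : ℤ) :=
                    hfbound j (l j)
                _ ≤ _ := by
                    apply mul_le_mul_of_nonneg_left _ (Finset.sum_nonneg fun m _ => abs_nonneg _)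
                    exact_mod_cast hmono.monotone (by omega : l j + D ≤ l i + D)
          _ ≤ ∑ j : Fin s, (∑ m ∈ Finset.range ((A j).natDegree + 1), |(A j).coeff m|) * (r (l i + D) : ℤ) := by
              apply Finset.sum_le_sum_of_subset_of_nonneg (Finset.subset_univ _)
              intro j _ _
              apply mul_nonneg (Finset.sum_nonneg fun m _ => abs_nonneg _) (by positivity)
          _ = Cb * r (l i + D) := by rw [hCb, Finset.sum_mul]
      have happb : |app r (B p) n₀| ≤ |z| + Cb * r (l i + D) := by
        rw [hrest]
        calc |z - ∑ j ∈ Iᶜ, f j (l j)| ≤ |z| + |∑ j ∈ Iᶜ, f j (l j)| := abs_sub _ _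
          _ ≤ |z| + Cb * r (l i + D) := by omega
      set u := max (l i + D) Nρ with hu
      have hkey2 : n₀ ≤ u + Np p + Mp p := by
        by_contra hcon
        push_neg at hcon
        have hun : u + (n₀ - u) = n₀ := by omega
        have hru1 : (1 : ℝ) ≤ r u := by
          exact_mod_cast r_pos r hmono u (by omega)
        have hrpow : ρ ^ (n₀ - u) * r u ≤ r n₀ := by
          have := ratio_pow_s5 r ρ hρ1 Nρ hNρ u (by omega) (n₀ - u)
          rwa [hun] at this
        have hN : ε p * r n₀ ≤ |(app r (B p) n₀ : ℝ)| := hNp n₀ (by omega)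
        have hcast : |(app r (B p) n₀ : ℝ)| ≤ (|z| : ℝ) + Cb * r (l i + D) := by
          rw [← Int.cast_abs]
          exact_mod_cast happb
        have hmon2 : (Cb : ℝ) * r (l i + D) ≤ Cb * r u := by
          apply mul_le_mul_of_nonneg_left _ (by exact_mod_cast hCbnn)
          exact_mod_cast hmono.monotone (le_max_left _ _)
        have hchain : ε p * (ρ ^ (n₀ - u) * r u) ≤ ((|z| : ℝ) + Cb) * r u := by
          calc ε p * (ρ ^ (n₀ - u) * r u) ≤ ε p * r n₀ :=
                mul_le_mul_of_nonneg_left hrpow hε.le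
            _ ≤ (|z| : ℝ) + Cb * r (l i + D) := le_trans hN hcast
            _ ≤ (|z| : ℝ) + Cb * r u := by linarith
            _ ≤ ((|z| : ℝ) + Cb) * r u := by
                have hz : (0:ℝ) ≤ (|z| : ℝ) := by positivity
                have hCb' : (0:ℝ) ≤ (Cb : ℝ) := by exact_mod_cast hCbnn
                nlinarith [hru1]
        have hrupos : (0:ℝ) < r u := by linarith
        have h6 : ε p * ρ ^ (n₀ - u) ≤ (|z| : ℝ) + Cb := by
          have h := hchain
          rw [← mul_assoc] at h
          exact le_of_mul_le_mul_right h hrupos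
        have h7 : ρ ^ (Mp p) ≤ ρ ^ (n₀ - u) := pow_le_pow_right₀ hρ1.le (by omega)
        have h8 : ε p * ρ ^ (Mp p) ≤ ε p * ρ ^ (n₀ - u) :=
          mul_le_mul_of_nonneg_left h7 hε.le
        linarith [hMp]
      have hNMb : Np p + Mp p ≤ NM := by
        rw [hNM]; exact Finset.le_sup (f := fun q : Pat => Np q + Mp q) (Finset.mem_univ p)
      have hub : u ≤ l i + D + Nρ := by omega
      omega
  -- final assembly
  obtain ⟨G, hG⟩ := main s
  have hall : ∀ l, IsNondegenerateSolution f z l → ∀ i j : Fin s, l j ≤ l i + G := by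
    intro l hl i j
    have hcard : (Finset.univ.filter (fun j => l i < l j)).card < s := by
      have hne : Finset.univ.filter (fun j => l i < l j) ≠ Finset.univ := by
        intro h
        have : i ∈ Finset.univ.filter (fun j => l i < l j) := by
          rw [h]; exact Finset.mem_univ i
        simp at this
      have := Finset.card_lt_iff_ne_univ _ |>.2 hne
      simpa using this
    have := hG l hl i hcard
    have := Finset.le_sup (f := l) (Finset.mem_univ j)
    omega
  refine ⟨Fintype.card (Fin s → Fin (2 * G + 1)),
    fun i j => ((((Fintype.equivFin (Fin s → Fin (2 * G + 1))).symm i) j : ℕ) : ℤ) - G, ?_⟩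
  intro l hl
  set i0 : Fin s := ⟨0, hs⟩ with hi0
  have h1 : ∀ j, l j ≤ l i0 + G := fun j => hall l hl i0 j
  have h2 : ∀ j, l i0 ≤ l j + G := fun j => hall l hl j i0
  refine ⟨(Fintype.equivFin (Fin s → Fin (2 * G + 1)))
    (fun j => ⟨l j + G - l i0, by have := h1 j; have := h2 j; omega⟩), fun j => ?_⟩
  simp only [Equiv.symm_apply_apply]
  have := h2 j
  push_cast
  omega
end

section
/- Assume Dickson's conjecture. Let f_i(x) = a_i x + b_i for i ≤ k, where a_i, b_i are natural numbers with a_i ≥ 1. Let m, r be fixed coprime natural numbers with r < m. Suppose that no integer n > 1 divides ∏_{i≤k} f_i(s) for every s ∈ ℕ, and that there exists ε with 0 < ε < m such that a_i ε + b_i ≡ r (mod m) for all i ≤ k. Then there exist infinitely many natural numbers s such that for all i ≤ k, f_i(s) is a prime number congruent to r modulo m. -/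
/-- Dickson's conjecture (D): given linear polynomials `fᵢ(x) = aᵢ x + bᵢ`
(`i < k`, `aᵢ ≥ 1`, `bᵢ ≥ 0`) such that no integer `n > 1` divides
`∏_{i<k} fᵢ(s)` for every `s ∈ ℕ`, there are infinitely many `m ∈ ℕ` such that
`fᵢ(m)` is prime for all `i < k`. -/
def DicksonConjecture : Prop :=
  ∀ (k : ℕ) (a b : ℕ → ℤ), 1 ≤ k →
    (∀ i < k, 1 ≤ a i) → (∀ i < k, 0 ≤ b i) →
    (¬ ∃ n : ℤ, 1 < n ∧ ∀ s : ℕ, n ∣ ∏ i ∈ Finset.range k, (a i * s + b i)) →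
    {m : ℕ | ∀ i < k, Prime (a i * m + b i)}.Infinite

/-- assuming Dickson's conjecture, if `fᵢ(x) = aᵢ x + bᵢ` (`i ≤ k`,
`aᵢ ≥ 1` naturals), `r < m` are coprime, no integer `n > 1` divides
`∏_{i ≤ k} fᵢ(s)` for all `s`, and for some `0 < ε < m` one has
`aᵢ ε + bᵢ ≡ r (mod m)` for all `i ≤ k`, then there are infinitely many `s`
such that each `fᵢ(s)` is a prime congruent to `r` modulo `m`. -/
theorem infinitely_many_primes_in_congruence_class_of_dickson
    (hD : DicksonConjecture)
    (k : ℕ) (a b : ℕ → ℕ) (ha : ∀ i ≤ k, 1 ≤ a i)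
    (m r : ℕ) (hrm : r < m) (hco : Nat.Coprime m r)
    (hstar : ¬ ∃ n : ℕ, 1 < n ∧ ∀ s : ℕ,
      n ∣ ∏ i ∈ Finset.range (k + 1), (a i * s + b i))
    (ε : ℕ) (hε0 : 0 < ε) (hεm : ε < m)
    (hmod : ∀ i ≤ k, a i * ε + b i ≡ r [MOD m]) :
    {s : ℕ | ∀ i ≤ k,
      Nat.Prime (a i * s + b i) ∧ a i * s + b i ≡ r [MOD m]}.Infinite := by
  have hm0 : 0 < m := lt_of_le_of_lt (Nat.zero_le r) hrm
  -- the key hypothesis for Dickson applied to gᵢ(s) = aᵢ m s + (aᵢ ε + bᵢ)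
  have key : ¬ ∃ n : ℤ, 1 < n ∧ ∀ s : ℕ,
      n ∣ ∏ i ∈ Finset.range (k + 1),
        (((a i * m : ℕ) : ℤ) * s + ((a i * ε + b i : ℕ) : ℤ)) := by
    rintro ⟨n, hn1, hn⟩
    have hnab : 1 < n.natAbs := by
      have h : (n.natAbs : ℤ) = n := Int.natAbs_of_nonneg (by linarith)
      exact_mod_cast h ▸ hn1
    set p := n.natAbs.minFac with hpdef
    have hpp : p.Prime := Nat.minFac_prime (by omega)
    have hpd : (p : ℤ) ∣ n :=
      dvd_trans (Int.natCast_dvd_natCast.mpr (Nat.minFac_dvd _))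
        (Int.natAbs_dvd.mpr dvd_rfl)
    have hps : ∀ s : ℕ, p ∣ ∏ i ∈ Finset.range (k + 1),
        (a i * m * s + (a i * ε + b i)) := by
      intro s
      have h := dvd_trans hpd (hn s)
      have he : (∏ i ∈ Finset.range (k + 1),
          (((a i * m : ℕ) : ℤ) * s + ((a i * ε + b i : ℕ) : ℤ)))
          = ((∏ i ∈ Finset.range (k + 1),
              (a i * m * s + (a i * ε + b i)) : ℕ) : ℤ) := by
        push_cast
        exact Finset.prod_congr rfl fun i _ => by ring
      rw [he] at h
      exact_mod_cast h
    haveI : Fact p.Prime := ⟨hpp⟩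
    by_cases hpm : p ∣ m
    · -- then p ∣ r, contradicting coprimality
      have h0 := hps 0
      simp only [Nat.mul_zero, Nat.zero_add] at h0
      have h0' : ((∏ i ∈ Finset.range (k + 1), (a i * ε + b i) : ℕ) : ZMod p) = 0 :=
        (ZMod.natCast_eq_zero_iff _ _).mpr h0
      push_cast at h0'
      have hr : ∀ i ∈ Finset.range (k + 1),
          ((a i : ZMod p) * (ε : ZMod p) + (b i : ZMod p)) = (r : ZMod p) := by
        intro i hi
        have hik : i ≤ k := by simpa [Nat.lt_succ_iff] using hi
        have := (hmod i hik).of_dvd hpm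
        have := (ZMod.natCast_eq_natCast_iff _ _ _).mpr this
        push_cast at this
        exact this
      rw [Finset.prod_congr rfl hr, Finset.prod_const, Finset.card_range] at h0'
      have hr0 : (r : ZMod p) = 0 := by
        exact pow_eq_zero_iff (by omega) |>.mp h0'
      have hpr : p ∣ r := (ZMod.natCast_eq_zero_iff _ _).mp hr0
      have : p ∣ Nat.gcd m r := Nat.dvd_gcd hpm hpr
      rw [hco] at this
      exact hpp.ne_one (Nat.dvd_one.mp this)
    · -- p ∤ m : then p divides every ∏ fᵢ(t), contradicting hstar
      have hmu : (m : ZMod p) ≠ 0 := fun h =>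
        hpm ((ZMod.natCast_eq_zero_iff _ _).mp h)
      apply hstar
      refine ⟨p, hpp.one_lt, fun t => ?_⟩
      set z : ZMod p := ((t : ZMod p) - (ε : ZMod p)) * (m : ZMod p)⁻¹ with hz
      set s : ℕ := z.val with hsdef
      have hsz : (s : ZMod p) = z := ZMod.natCast_rightInverse z
      have hst : (m : ZMod p) * (s : ZMod p) + (ε : ZMod p) = (t : ZMod p) := by
        rw [hsz, hz]
        field_simp
        ring
      have hd : ((∏ i ∈ Finset.range (k + 1),
          (a i * m * s + (a i * ε + b i)) : ℕ) : ZMod p) = 0 :=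
        (ZMod.natCast_eq_zero_iff _ _).mpr (hps s)
      rw [← ZMod.natCast_eq_zero_iff]
      push_cast at hd ⊢
      have heq : ∀ i ∈ Finset.range (k + 1),
          ((a i : ZMod p) * (t : ZMod p) + (b i : ZMod p))
          = (a i : ZMod p) * (m : ZMod p) * (s : ZMod p)
            + ((a i : ZMod p) * (ε : ZMod p) + (b i : ZMod p)) := fun i _ => by
        rw [← hst]; ring
      rw [Finset.prod_congr rfl heq]
      exact hd
  -- apply Dickson's conjecture
  have hS := hD (k + 1) (fun i => ((a i * m : ℕ) : ℤ)) (fun i => ((a i * ε + b i : ℕ) : ℤ))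
      (Nat.le_add_left 1 k)
      (fun i hi => by
        have h1 := ha i (Nat.lt_succ_iff.mp hi)
        have h2 : 1 ≤ a i * m := Nat.one_le_iff_ne_zero.mpr (by positivity)
        show (1 : ℤ) ≤ ((a i * m : ℕ) : ℤ)
        exact_mod_cast h2)
      (fun i _ => by
        show (0 : ℤ) ≤ ((a i * ε + b i : ℕ) : ℤ)
        positivity) key
  have hinj : Function.Injective (fun s : ℕ => m * s + ε) := fun x y h =>
    Nat.eq_of_mul_eq_mul_left hm0 (Nat.add_right_cancel h)
  apply Set.Infinite.mono ?_ (hS.image hinj.injOn)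
  rintro _ ⟨s, hs, rfl⟩
  intro i hik
  have hp := hs i (Nat.lt_succ_iff.mpr hik)
  have he : ((a i * m : ℕ) : ℤ) * s + ((a i * ε + b i : ℕ) : ℤ)
      = ((a i * (m * s + ε) + b i : ℕ) : ℤ) := by push_cast; ring
  rw [he] at hp
  constructor
  · exact Nat.prime_iff_prime_int.mpr hp
  · have hkey : a i * (m * s + ε) + b i = m * (a i * s) + (a i * ε + b i) := by ring
    have hle : a i * ε + b i ≤ a i * (m * s + ε) + b i := by omega
    have hdvd : m ∣ a i * (m * s + ε) + b i - (a i * ε + b i) := ⟨a i * s, by omega⟩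
    exact (((Nat.modEq_iff_dvd' hle).mpr hdvd).symm).trans (hmod i hik)
end

section
/- Assume Dickson's conjecture. Fix coprime natural numbers m, r with r < m. Let f_i(x) = a_i x + b_i with integers a_i ≥ 1, b_i, for i < k, and g_j(x) = c_j x + d_j with integers c_j ≥ 1, d_j, for j < k'. Suppose there exists ε with 0 < ε < m such that a_i ε + b_i ≡ r (mod m) for all i < k, that no integer n > 1 divides ∏_{i<k} f_i(s) for every s ∈ ℕ, and that (a_i, b_i) ≠ (c_j, d_j) for all i < k and j < k'. Then there exist infinitely many natural numbers s for which, for all i < k and j < k', f_i(s) is prime and congruent to r modulo m, and g_j(s) is composite. -/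
private lemma dvd_lin_shift {q A B x y : ℤ} (hxy : q ∣ y - x) (h : q ∣ A * x + B) :
    q ∣ A * y + B := by
  have : A * y + B = (A * x + B) + A * (y - x) := by ring
  rw [this]
  exact dvd_add h (hxy.mul_left A)

private lemma neg_natAbs_le' (b : ℤ) : -((b.natAbs : ℤ)) ≤ b := by
  rw [← Int.abs_eq_natAbs]; exact neg_abs_le b

private lemma exists_modulus (m r ε k k' : ℕ) (a b c d : ℕ → ℤ)
    (hm0 : 0 < m) (hco : Nat.Coprime m r)
    (hc : ∀ j < k', 1 ≤ c j)
    (hmod : ∀ i < k, a i * ε + b i ≡ (r : ℤ) [ZMOD (m : ℤ)]) :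
    ∃ M e : ℕ, 0 < M ∧ m ∣ M ∧ e ≡ ε [MOD m] ∧
      (∀ p : ℕ, p.Prime → p ∣ M → ∀ i < k, ¬ ((p:ℤ) ∣ a i * e + b i)) ∧
      (∀ j < k', (∃ i < k, a i * d j = b i * c j) ∨
        ∃ q : ℕ, q.Prime ∧ q ∣ M ∧ ((q:ℤ) ∣ c j * e + d j)) := by
  suffices h : ∀ n, n ≤ k' → ∃ M e : ℕ, 0 < M ∧ m ∣ M ∧ e ≡ ε [MOD m] ∧
      (∀ p : ℕ, p.Prime → p ∣ M → ∀ i < k, ¬ ((p:ℤ) ∣ a i * e + b i)) ∧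
      (∀ j < n, (∃ i < k, a i * d j = b i * c j) ∨
        ∃ q : ℕ, q.Prime ∧ q ∣ M ∧ ((q:ℤ) ∣ c j * e + d j)) by
    exact h k' le_rfl
  intro n
  induction n with
  | zero =>
    intro _
    refine ⟨m, ε, hm0, dvd_rfl, Nat.ModEq.refl _, ?_, by omega⟩
    intro p pp hpm i hik hdvd
    have h1 : (m:ℤ) ∣ (r:ℤ) - (a i * ε + b i) := (Int.modEq_iff_dvd.mp (hmod i hik))
    have h2 : (p:ℤ) ∣ (r:ℤ) := by
      have : (p:ℤ) ∣ (r:ℤ) - (a i * ε + b i) :=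
        dvd_trans (Int.natCast_dvd_natCast.mpr hpm) h1
      have := dvd_add this hdvd
      simpa using this
    have hpr : p ∣ r := Int.natCast_dvd_natCast.mp h2
    have : p ∣ Nat.gcd m r := Nat.dvd_gcd hpm hpr
    rw [hco] at this
    exact pp.one_lt.ne' (Nat.dvd_one.mp this)
  | succ n ih =>
    intro hn
    obtain ⟨M, e, hM0, hmM, heε, hC1, hC2⟩ := ih (by omega)
    have hnk' : n < k' := hn
    by_cases hAB : ∃ i < k, a i * d n = b i * c n
    · refine ⟨M, e, hM0, hmM, heε, hC1, ?_⟩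
      intro j hj
      rcases Nat.lt_succ_iff_lt_or_eq.mp hj with hj' | rfl
      · exact hC2 j hj'
      · exact Or.inl hAB
    · push_neg at hAB
      -- pick a big prime q
      set R : ℕ := ∑ i ∈ Finset.range k, (c n * b i - a i * d n).natAbs with hR
      obtain ⟨q, hqb, hq⟩ := Nat.exists_infinite_primes (M + (c n).natAbs + R + 1)
      haveI : Fact q.Prime := ⟨hq⟩
      have hcn1 : (1:ℤ) ≤ c n := hc n hnk'
      have hqM : M < q := by omega
      have hqc : ((c n : ZMod q)) ≠ 0 := by
        intro h0
        have : (q:ℤ) ∣ c n := by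
          have := (ZMod.intCast_zmod_eq_zero_iff_dvd (c n) q).mp (by exact_mod_cast h0)
          exact this
        have hle : (q:ℤ) ≤ c n := Int.le_of_dvd (by linarith) this
        have : (c n).natAbs < q := by omega
        have : (c n : ℤ) < q := by
          calc (c n : ℤ) ≤ (c n).natAbs := Int.le_natAbs
          _ < q := by exact_mod_cast this
        linarith
      set w : ZMod q := (-(d n : ZMod q)) * (c n : ZMod q)⁻¹ with hw
      set u : ℕ := w.val with hu
      have hgu : (q:ℤ) ∣ c n * u + d n := by
        rw [← ZMod.intCast_zmod_eq_zero_iff_dvd]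
        push_cast
        have huw : ((u : ℕ) : ZMod q) = w := ZMod.natCast_rightInverse w
        rw [huw, hw]
        field_simp
        ring
      have hcoMq : M.Coprime q := ((hq.coprime_iff_not_dvd.mpr
        (fun h => absurd (Nat.le_of_dvd hM0 h) (by omega))).symm)
      obtain ⟨e', he'M, he'q⟩ := Nat.chineseRemainder hcoMq e u
      have hMe' : (M:ℤ) ∣ (e':ℤ) - e := by
        have := he'M.dvd
        simpa using (dvd_neg.mpr this)
      have hqe' : (q:ℤ) ∣ (e':ℤ) - u := by
        have := he'q.dvd
        simpa using (dvd_neg.mpr this)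
      have hgq : (q:ℤ) ∣ c n * e' + d n := dvd_lin_shift hqe' hgu
      refine ⟨M * q, e', Nat.mul_pos hM0 hq.pos, hmM.mul_right q, ?_, ?_, ?_⟩
      · exact (he'M.of_dvd hmM).trans heε
      · intro p pp hpMq i hik hdvd
        rcases (Nat.Prime.dvd_mul pp).mp hpMq with hpM | hpq
        · have hpe : (p:ℤ) ∣ (e':ℤ) - e :=
            dvd_trans (Int.natCast_dvd_natCast.mpr hpM) hMe'
          exact hC1 p pp hpM i hik (dvd_lin_shift (by simpa using dvd_neg.mpr hpe) hdvd)
        · have hpq' : p = q := (Nat.prime_dvd_prime_iff_eq pp hq).mp hpq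
          subst hpq'
          -- q divides the resultant
          have hres : (p:ℤ) ∣ c n * b i - a i * d n := by
            have h1 : (p:ℤ) ∣ c n * (a i * e' + b i) - a i * (c n * e' + d n) :=
              dvd_sub (hdvd.mul_left _) (hgq.mul_left _)
            have : c n * (a i * e' + b i) - a i * (c n * e' + d n)
                = c n * b i - a i * d n := by ring
            rwa [this] at h1
          have hne0 : c n * b i - a i * d n ≠ 0 := by
            intro h0
            exact hAB i hik (by linarith [sub_eq_zero.mp h0])
          have hd1 : p ∣ (c n * b i - a i * d n).natAbs := by
            have := Int.natAbs_dvd_natAbs.mpr hres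
            simpa using this
          have hle : p ≤ (c n * b i - a i * d n).natAbs :=
            Nat.le_of_dvd (Int.natAbs_pos.mpr hne0) hd1
          have hsum : (c n * b i - a i * d n).natAbs ≤ R := by
            rw [hR]
            exact Finset.single_le_sum (f := fun i => (c n * b i - a i * d n).natAbs)
              (fun _ _ => Nat.zero_le _) (Finset.mem_range.mpr hik)
          omega
      · intro j hj
        rcases Nat.lt_succ_iff_lt_or_eq.mp hj with hj' | rfl
        · rcases hC2 j hj' with h | ⟨q₀, hq₀, hq₀M, hq₀e⟩
          · exact Or.inl h
          · refine Or.inr ⟨q₀, hq₀, hq₀M.mul_right q, ?_⟩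
            have : (q₀:ℤ) ∣ (e':ℤ) - e :=
              dvd_trans (Int.natCast_dvd_natCast.mpr hq₀M) hMe'
            exact dvd_lin_shift this hq₀e
        · exact Or.inr ⟨q, hq, dvd_mul_left q M, hgq⟩

/-- assuming Dickson's conjecture, with `fᵢ(x) = aᵢ x + bᵢ`
(`i < k`, integers, `aᵢ ≥ 1`) and `gⱼ(x) = cⱼ x + dⱼ` (`j < k'`, integers,
`cⱼ ≥ 1`), `r < m` coprime, some `0 < ε < m` with `aᵢ ε + bᵢ ≡ r (mod m)`, the
condition `(⋆)` for `f̄`, and `(aᵢ, bᵢ) ≠ (cⱼ, dⱼ)` for all `i, j`, there are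
infinitely many `s` such that each `fᵢ(s)` is a prime congruent to `r` mod `m`
and each `gⱼ(s)` is composite. -/
theorem infinitely_many_primes_avoiding_composites_of_dickson
    (hD : DicksonConjecture)
    (m r : ℕ) (hrm : r < m) (hco : Nat.Coprime m r)
    (k k' : ℕ) (a b : ℕ → ℤ) (c d : ℕ → ℤ)
    (ha : ∀ i < k, 1 ≤ a i) (hc : ∀ j < k', 1 ≤ c j)
    (ε : ℕ) (hε0 : 0 < ε) (hεm : ε < m)
    (hmod : ∀ i < k, a i * ε + b i ≡ (r : ℤ) [ZMOD (m : ℤ)])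
    (hstar : ¬ ∃ n : ℤ, 1 < n ∧ ∀ s : ℕ,
      n ∣ ∏ i ∈ Finset.range k, (a i * s + b i))
    (hne : ∀ i < k, ∀ j < k', (a i, b i) ≠ (c j, d j)) :
    {s : ℕ |
      (∀ i < k, Prime (a i * s + b i) ∧ a i * s + b i ≡ (r : ℤ) [ZMOD (m : ℤ)]) ∧
      (∀ j < k', ∃ t : ℕ, (c j * s + d j : ℤ) = t ∧ 1 < t ∧ ¬ Nat.Prime t)}.Infinite := by
  obtain ⟨M, e, hM0, hmM, heε, hC1, hC2⟩ :=
    exists_modulus m r ε k k' a b c d (by omega) hco hc hmod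
  -- shift e to make all constant terms nonnegative
  set T : ℕ := ∑ i ∈ Finset.range k, (b i).natAbs with hT
  set e' : ℕ := e + M * T with he'def
  have he'e : e' ≡ e [MOD M] := by
    show (e + M * T) % M = e % M
    simp [Nat.add_mul_mod_self_left]
  have hMe' : (M:ℤ) ∣ (e':ℤ) - e := by
    refine ⟨T, by push_cast [he'def]; ring⟩
  have hC1' : ∀ p : ℕ, p.Prime → p ∣ M → ∀ i < k, ¬ ((p:ℤ) ∣ a i * e' + b i) := by
    intro p pp hpM i hik hdvd
    have hpe : (p:ℤ) ∣ (e:ℤ) - e' := by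
      have := dvd_trans (Int.natCast_dvd_natCast.mpr hpM) hMe'
      simpa using dvd_neg.mpr this
    exact hC1 p pp hpM i hik (dvd_lin_shift hpe hdvd)
  have hC2' : ∀ j < k', (∃ i < k, a i * d j = b i * c j) ∨
      ∃ q : ℕ, q.Prime ∧ q ∣ M ∧ ((q:ℤ) ∣ c j * e' + d j) := by
    intro j hj
    rcases hC2 j hj with h | ⟨q, hq, hqM, hqe⟩
    · exact Or.inl h
    · refine Or.inr ⟨q, hq, hqM, dvd_lin_shift
        (dvd_trans (Int.natCast_dvd_natCast.mpr hqM) hMe') hqe⟩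
  have hB0 : ∀ i < k, 0 ≤ a i * e' + b i := by
    intro i hik
    have h1 : (1:ℤ) ≤ a i := ha i hik
    have h2 : ((b i).natAbs : ℕ) ≤ T :=
      Finset.single_le_sum (f := fun i => (b i).natAbs)
        (fun _ _ => Nat.zero_le _) (Finset.mem_range.mpr hik)
    have h3 : (T:ℤ) ≤ e' := by
      have : T ≤ e' := by
        calc T ≤ M * T := Nat.le_mul_of_pos_left T hM0
        _ ≤ e + M * T := Nat.le_add_left _ _
      exact_mod_cast this
    have h4 : -(((b i).natAbs : ℤ)) ≤ b i := neg_natAbs_le' (b i)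
    have h5 : ((b i).natAbs : ℤ) ≤ T := by exact_mod_cast h2
    nlinarith [Int.ofNat_nonneg e']
  -- the infinite set from Dickson (or trivially if k = 0)
  have hS : {x : ℕ | ∀ i < k, Prime ((a i * M) * x + (a i * e' + b i))}.Infinite := by
    rcases Nat.eq_zero_or_pos k with hk0 | hk1
    · have : {x : ℕ | ∀ i < k, Prime ((a i * M) * x + (a i * e' + b i))} = Set.univ := by
        ext x; simp [hk0]
      rw [this]; exact Set.infinite_univ
    · apply hD k (fun i => a i * M) (fun i => a i * e' + b i) hk1
      · intro i hik
        have h1 : (1:ℤ) ≤ a i := ha i hik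
        have h2 : (1:ℤ) ≤ M := by exact_mod_cast hM0
        nlinarith
      · exact hB0
      · rintro ⟨n, hn1, hn⟩
        obtain ⟨p, pp, hpn⟩ := Nat.exists_prime_and_dvd (n := n.natAbs) (by omega)
        haveI : Fact p.Prime := ⟨pp⟩
        have hpdvd : (p:ℤ) ∣ n := by
          have h1 : (p:ℤ) ∣ (n.natAbs : ℤ) := Int.natCast_dvd_natCast.mpr hpn
          exact h1.trans (Int.natAbs_dvd.mpr dvd_rfl)
        have hp : ∀ x : ℕ, (p:ℤ) ∣ ∏ i ∈ Finset.range k,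
            ((a i * M) * x + (a i * e' + b i)) := fun x => hpdvd.trans (hn x)
        by_cases hpM : p ∣ M
        · have h0 := hp 0
          have h0' : (p:ℤ) ∣ ∏ i ∈ Finset.range k, (a i * e' + b i) := by
            simpa using h0
          obtain ⟨i, hi, hdvd⟩ := (Nat.prime_iff_prime_int.mp pp).exists_mem_finset_dvd h0'
          exact hC1' p pp hpM i (Finset.mem_range.mp hi) hdvd
        · apply hstar
          refine ⟨(p:ℤ), by exact_mod_cast pp.one_lt, fun s => ?_⟩
          have hMu : ((M : ℕ) : ZMod p) ≠ 0 := fun h =>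
            hpM ((ZMod.natCast_eq_zero_iff M p).mp h)
          set x : ℕ := (((s : ZMod p) - (e' : ZMod p)) * (M : ZMod p)⁻¹).val with hx
          have hxs : (M : ZMod p) * (x : ZMod p) + (e' : ZMod p) = (s : ZMod p) := by
            rw [hx, ZMod.natCast_rightInverse _]
            field_simp
            ring
          have h1 := hp x
          rw [← ZMod.intCast_zmod_eq_zero_iff_dvd] at h1 ⊢
          push_cast at h1 ⊢
          calc ∏ i ∈ Finset.range k, ((a i : ZMod p) * (s : ZMod p) + (b i : ZMod p))
              = ∏ i ∈ Finset.range k,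
                ((a i : ZMod p) * (M : ZMod p) * (x : ZMod p)
                  + ((a i : ZMod p) * (e' : ZMod p) + (b i : ZMod p))) := by
                refine Finset.prod_congr rfl fun i _ => ?_
                rw [← hxs]; ring
          _ = 0 := h1
  -- form the final infinite set
  set E : ℕ := 1 + M + (∑ j ∈ Finset.range k', (d j).natAbs) + T
      + (∑ i ∈ Finset.range k, (a i).natAbs) with hE
  have hinj : Set.InjOn (fun x => M * x + e')
      {x : ℕ | ∀ i < k, Prime ((a i * M) * x + (a i * e' + b i))} := by
    intro x _ y _ hxy
    simp only at hxy
    have : M * x = M * y := by omega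
    exact Nat.eq_of_mul_eq_mul_left hM0 this
  have hbig : (((fun x => M * x + e') ''
      {x : ℕ | ∀ i < k, Prime ((a i * M) * x + (a i * e' + b i))}) \ Set.Iio E).Infinite :=
    (hS.image hinj).diff (Set.finite_Iio E)
  apply hbig.mono
  rintro s ⟨⟨x, hxS, rfl⟩, hsE⟩
  simp only [Set.mem_Iio, not_lt] at hsE
  set s : ℕ := M * x + e' with hs
  have hse' : s ≡ e' [MOD M] := by
    show (M * x + e') % M = e' % M
    simp [Nat.mul_add_mod]
  have hdMs : (M:ℤ) ∣ (s:ℤ) - e' := ⟨x, by push_cast [hs]; ring⟩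
  have hprime : ∀ i < k, Prime (a i * s + b i) := by
    intro i hik
    have := hxS i hik
    have heq : a i * (s:ℤ) + b i = (a i * M) * x + (a i * e' + b i) := by
      push_cast [hs]; ring
    rwa [heq]
  constructor
  · intro i hik
    refine ⟨hprime i hik, ?_⟩
    have hsε : s ≡ ε [MOD m] :=
      (hse'.of_dvd hmM).trans ((he'e.of_dvd hmM).trans heε)
    have hdvd : (m:ℤ) ∣ (ε:ℤ) - s := hsε.dvd
    have h1 : a i * s + b i ≡ a i * ε + b i [ZMOD (m:ℤ)] :=
      Int.modEq_iff_dvd.mpr (by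
        have : a i * (ε:ℤ) + b i - (a i * s + b i) = a i * ((ε:ℤ) - s) := by ring
        rw [this]; exact hdvd.mul_left _)
    exact h1.trans (hmod i hik)
  · intro j hjk'
    have hsj : (1:ℤ) + M ≤ (s:ℤ) + d j := by
      have h2 : ((d j).natAbs : ℕ) ≤ ∑ j ∈ Finset.range k', (d j).natAbs :=
        Finset.single_le_sum (f := fun j => (d j).natAbs)
          (fun _ _ => Nat.zero_le _) (Finset.mem_range.mpr hjk')
      have h3 : -(((d j).natAbs : ℤ)) ≤ d j := neg_natAbs_le' (d j)
      have h4 : (E:ℤ) ≤ s := by exact_mod_cast hsE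
      have h5 : (1:ℤ) + M + ((d j).natAbs : ℤ) ≤ (E:ℤ) := by
        exact_mod_cast (by omega : 1 + M + (d j).natAbs ≤ E)
      linarith
    have hcj : (1:ℤ) ≤ c j := hc j hjk'
    have hcs : (s:ℤ) + d j ≤ c j * s + d j := by
      have : (s:ℤ) ≤ c j * s := le_mul_of_one_le_left (by positivity) hcj
      linarith
    rcases hC2' j hjk' with ⟨i, hik, hprop⟩ | ⟨q, hq, hqM, hqe⟩
    · -- proportional case
      have hp := hprime i hik
      set p : ℤ := a i * s + b i with hpdef
      have hai : (1:ℤ) ≤ a i := ha i hik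
      have hpbig : 1 + a i ≤ p := by
        have h2 : ((a i).natAbs : ℕ) ≤ ∑ i ∈ Finset.range k, (a i).natAbs :=
          Finset.single_le_sum (f := fun i => (a i).natAbs)
            (fun _ _ => Nat.zero_le _) (Finset.mem_range.mpr hik)
        have h2' : ((b i).natAbs : ℕ) ≤ T :=
          Finset.single_le_sum (f := fun i => (b i).natAbs)
            (fun _ _ => Nat.zero_le _) (Finset.mem_range.mpr hik)
        have h3 : -(((b i).natAbs : ℤ)) ≤ b i := neg_natAbs_le' (b i)
        have h3' : (a i : ℤ) ≤ (a i).natAbs := Int.le_natAbs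
        have h4 : (E:ℤ) ≤ s := by exact_mod_cast hsE
        have h5 : (1:ℤ) + ((a i).natAbs : ℤ) + ((b i).natAbs : ℤ) ≤ (E:ℤ) := by
          exact_mod_cast (by omega : 1 + (a i).natAbs + (b i).natAbs ≤ E)
        have h6 : (s:ℤ) ≤ a i * s := le_mul_of_one_le_left (by positivity) hai
        linarith
      have hpa : ¬ p ∣ a i := by
        intro hdvd
        have := Int.le_of_dvd (by linarith) hdvd
        linarith
      have hcop : IsCoprime (a i) p := (hp.coprime_iff_not_dvd.mpr hpa).symm
      have hkey : a i * (c j * s + d j) = c j * p := by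
        rw [hpdef]; linear_combination hprop
      have hdvdcp : a i ∣ c j * p := ⟨c j * s + d j, hkey.symm⟩
      obtain ⟨t, ht⟩ := hcop.dvd_of_dvd_mul_right hdvdcp
      have ht1 : 1 ≤ t := by nlinarith
      have ht2 : t ≠ 1 := by
        rintro rfl
        rw [mul_one] at ht
        have hdj : d j = b i := by
          have hane : a i ≠ 0 := by linarith
          rw [ht] at hprop
          exact mul_left_cancel₀ hane (by linarith)
        exact hne i hik j hjk' (by rw [ht, hdj])
      have hX : c j * s + d j = t * p := by
        have hane : a i ≠ 0 := by linarith
        apply mul_left_cancel₀ hane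
        rw [hkey, ht]; ring
      have hp2 : (2:ℤ) ≤ p := by linarith
      refine ⟨t.toNat * p.toNat, ?_, ?_, Nat.not_prime_mul ?_ ?_⟩
      · rw [hX]; push_cast [Int.toNat_of_nonneg (by linarith : (0:ℤ) ≤ t),
          Int.toNat_of_nonneg (by linarith : (0:ℤ) ≤ p)]
        ring
      · have h1 : 2 ≤ p.toNat := by omega
        have ht1' : 1 ≤ t.toNat := by omega
        calc 1 < p.toNat := by omega
        _ ≤ t.toNat * p.toNat := Nat.le_mul_of_pos_left _ (by omega)
      · omega
      · omega
    · -- prime divisor case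
      have hqs : (q:ℤ) ∣ c j * s + d j :=
        dvd_lin_shift (dvd_trans (Int.natCast_dvd_natCast.mpr hqM) hdMs) hqe
      have hqM' : q ≤ M := Nat.le_of_dvd hM0 hqM
      set X : ℤ := c j * s + d j with hX
      have hX0 : (1:ℤ) + M ≤ X := le_trans hsj hcs
      refine ⟨X.toNat, ?_, ?_, ?_⟩
      · rw [Int.toNat_of_nonneg (by linarith)]
      · have : (1:ℤ) + M ≤ X := hX0
        omega
      · intro hP
        have hqX : q ∣ X.toNat := by
          have : (q:ℤ) ∣ (X.toNat : ℤ) := by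
            rwa [Int.toNat_of_nonneg (by linarith)]
          exact_mod_cast this
        rcases (hP.eq_one_or_self_of_dvd q hqX) with h1 | h1
        · exact hq.one_lt.ne' h1
        · have : (X.toNat : ℤ) = X := Int.toNat_of_nonneg (by linarith)
          have hXM : (M:ℤ) < X.toNat := by omega
          omega
end

section
/- Let M be a submonoid of (ℤ, ·, 1) and let G be the subgroup of (ℚ \ {0}, ·, 1) generated by M; assume G has the Mann property. Let n ≥ 2 and let a_1,…,a_n be nonzero integers. Then there exists a finite set S ⊆ G^{n−1} such that every tuple (x_1,…,x_n) ∈ M^n satisfying a_1 x_1 + ⋯ + a_n x_n = 0, with Σ_{i∈I} a_i x_i ≠ 0 for every proper nonempty subset I ⊊ {1,…,n}, is of the form x_j = g_j x_1 for all j ∈ {2,…,n}, for some (g_2,…,g_n) ∈ S; moreover one can take S to be the set of tuples (g_2,…,g_n) ∈ G^{n−1} that are non-degenerate solutions of a_1 + a_2 x_2 + ⋯ + a_n x_n = 0. -/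
/-- The subgroup of `ℚˣ` (the multiplicative group of nonzero rationals)
generated by a submonoid `M` of `(ℤ, ·, 1)`. -/
def subgroupGeneratedBy (M : Submonoid ℤ) : Subgroup ℚˣ :=
  Subgroup.closure {u : ℚˣ | ∃ m ∈ M, (u : ℚ) = (m : ℚ)}

/-- The underlying set of rationals of the subgroup of `ℚ \ {0}` generated
by a submonoid `M` of `(ℤ, ·, 1)`. -/
def GSet (M : Submonoid ℤ) : Set ℚ :=
  (fun u : ℚˣ => (u : ℚ)) '' (subgroupGeneratedBy M : Set ℚˣ)

/-- A subset `X` of `ℚ` has the Mann property: for all nonzero rationals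
`q₁, …, q_n`, the equation `q₁ x₁ + ⋯ + q_n x_n = 1` has only finitely many
non-degenerate solutions in `X^n`, where a solution is non-degenerate if every
nonempty subsum `∑_{i ∈ I} qᵢ xᵢ` is nonzero. -/
def MannProperty (X : Set ℚ) : Prop :=
  ∀ (n : ℕ), 1 ≤ n → ∀ q : Fin n → ℚ, (∀ i, q i ≠ 0) →
    {x : Fin n → ℚ | (∀ i, x i ∈ X) ∧ (∑ i, q i * x i) = 1 ∧
      ∀ I : Finset (Fin n), I.Nonempty → (∑ i ∈ I, q i * x i) ≠ 0}.Finite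

lemma ratio_mem_GSet (M : Submonoid ℤ) {m₁ m₂ : ℤ} (h₁ : m₁ ∈ M) (h₂ : m₂ ∈ M)
    (hm₁ : m₁ ≠ 0) (hm₂ : m₂ ≠ 0) : (m₁ : ℚ) / (m₂ : ℚ) ∈ GSet M := by
  have hq₁ : (m₁ : ℚ) ≠ 0 := Int.cast_ne_zero.mpr hm₁
  have hq₂ : (m₂ : ℚ) ≠ 0 := Int.cast_ne_zero.mpr hm₂
  have hu₁ : Units.mk0 _ hq₁ ∈ subgroupGeneratedBy M := Subgroup.subset_closure ⟨m₁, h₁, rfl⟩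
  have hu₂ : Units.mk0 _ hq₂ ∈ subgroupGeneratedBy M := Subgroup.subset_closure ⟨m₂, h₂, rfl⟩
  refine ⟨Units.mk0 _ hq₁ * (Units.mk0 _ hq₂)⁻¹, mul_mem hu₁ (inv_mem hu₂), ?_⟩
  simp [div_eq_mul_inv]

/-- let `M` be a submonoid of `(ℤ, ·, 1)` and `G` the subgroup of
`(ℚ \ {0}, ·, 1)` it generates; assume `G` has the Mann property. For `n ≥ 2`
and nonzero integers `a₁, …, a_n`, the set `S` of tuples `(1, g₂, …, g_n)` with
`gⱼ ∈ G` which are non-degenerate solutions of `a₁ + a₂ x₂ + ⋯ + a_n x_n = 0`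
is finite, and every non-degenerate solution `(x₁, …, x_n) ∈ M^n` of
`a₁ x₁ + ⋯ + a_n x_n = 0` satisfies `xⱼ = gⱼ x₁` for some `(gⱼ)ⱼ ∈ S`. -/
theorem nondegenerate_solutions_in_monoid_with_mann_property
    (M : Submonoid ℤ) (hMann : MannProperty (GSet M))
    (n : ℕ) (hn : 2 ≤ n) (a : Fin n → ℤ) (ha : ∀ i, a i ≠ 0) :
    have h0 : 0 < n := by omega
    let S : Set (Fin n → ℚ) :=
      {g : Fin n → ℚ | g ⟨0, h0⟩ = 1 ∧ (∀ j, j ≠ ⟨0, h0⟩ → g j ∈ GSet M) ∧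
        (∑ i, (a i : ℚ) * g i) = 0 ∧
        ∀ I : Finset (Fin n), I.Nonempty → I ≠ Finset.univ →
          (∑ i ∈ I, (a i : ℚ) * g i) ≠ 0}
    S.Finite ∧
      ∀ x : Fin n → ℤ, (∀ i, x i ∈ M) → (∑ i, a i * x i) = 0 →
        (∀ I : Finset (Fin n), I.Nonempty → I ≠ Finset.univ →
          (∑ i ∈ I, a i * x i) ≠ 0) →
        ∃ g ∈ S, ∀ j : Fin n, (x j : ℚ) = g j * (x ⟨0, h0⟩ : ℚ) := by
  intro h0 S
  obtain ⟨k, rfl⟩ : ∃ k, n = k + 1 := ⟨n - 1, by omega⟩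
  have hk : 1 ≤ k := by omega
  have hi0 : (⟨0, h0⟩ : Fin (k + 1)) = 0 := rfl
  have ha0 : ((a 0 : ℤ) : ℚ) ≠ 0 := Int.cast_ne_zero.mpr (ha 0)
  set q : Fin k → ℚ := fun j => -(a j.succ : ℚ) / (a 0) with hq_def
  have hq : ∀ j, q j ≠ 0 := fun j =>
    div_ne_zero (neg_ne_zero.mpr (Int.cast_ne_zero.mpr (ha _))) ha0
  have hT := hMann k hk q hq
  -- key rewriting of subsums
  have key : ∀ (g : Fin (k + 1) → ℚ) (I : Finset (Fin k)),
      ∑ j ∈ I, q j * g j.succ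
        = (-(∑ i ∈ I.map (Fin.succEmb k), (a i : ℚ) * g i)) / (a 0) := by
    intro g I
    rw [Finset.sum_map, ← Finset.sum_neg_distrib, Finset.sum_div]
    refine Finset.sum_congr rfl fun j _ => ?_
    simp [hq_def, div_mul_eq_mul_div, neg_mul]
  constructor
  · -- finiteness of S
    apply Set.Finite.of_finite_image (f := fun g : Fin (k + 1) → ℚ => g ∘ Fin.succ)
    · apply hT.subset
      rintro _ ⟨g, ⟨hg0, hgm, hgsum, hgnd⟩, rfl⟩
      rw [hi0] at hg0
      refine ⟨fun j => hgm _ (Fin.succ_ne_zero j), ?_, ?_⟩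
      · have hs : ∑ j : Fin k, (a j.succ : ℚ) * g j.succ = -(a 0 : ℚ) := by
          have := hgsum
          rw [Fin.sum_univ_succ, hg0, mul_one] at this
          linarith
        rw [show ∑ j : Fin k, q j * (g ∘ Fin.succ) j = ∑ j : Fin k, q j * g j.succ from rfl,
          key g Finset.univ, Finset.sum_map]
        rw [show ∑ j : Fin k, ((a ((Fin.succEmb k) j) : ℚ) * g ((Fin.succEmb k) j))
            = -(a 0 : ℚ) from hs]
        field_simp
      · intro I hI
        rw [show ∑ j ∈ I, q j * (g ∘ Fin.succ) j = ∑ j ∈ I, q j * g j.succ from rfl, key]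
        apply div_ne_zero _ ha0
        rw [neg_ne_zero]
        apply hgnd
        · exact hI.map
        · intro h
          have : (0 : Fin (k + 1)) ∈ I.map (Fin.succEmb k) := h ▸ Finset.mem_univ _
          obtain ⟨j, -, hj⟩ := Finset.mem_map.mp this
          exact Fin.succ_ne_zero j hj
    · rintro g ⟨hg0, -, -, -⟩ g' ⟨hg0', -, -, -⟩ h
      funext i
      refine Fin.cases ?_ ?_ i
      · rw [hi0] at hg0 hg0'; rw [hg0, hg0']
      · intro j; exact congrFun h j
  · intro x hx hsum hnd
    have hxne : ∀ i, x i ≠ 0 := by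
      intro i hxi
      refine hnd {i} ⟨i, Finset.mem_singleton_self i⟩ ?_ ?_
      · intro h
        have hc : ({i} : Finset (Fin (k + 1))).card = (Finset.univ : Finset (Fin (k+1))).card := by rw [h]
        simp [Finset.card_univ] at hc
        omega
      · simp [hxi]
    have hx0 : ((x 0 : ℤ) : ℚ) ≠ 0 := Int.cast_ne_zero.mpr (hxne 0)
    refine ⟨fun i => (x i : ℚ) / (x 0 : ℚ), ⟨?_, ?_, ?_, ?_⟩, ?_⟩
    · rw [hi0]; exact div_self hx0
    · intro j _; exact ratio_mem_GSet M (hx j) (hx 0) (hxne j) (hxne 0)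
    · have : (∑ i, (a i : ℚ) * (x i : ℚ)) = 0 := by exact_mod_cast hsum
      rw [show ∑ i, (a i : ℚ) * ((x i : ℚ) / (x 0 : ℚ))
          = (∑ i, (a i : ℚ) * (x i : ℚ)) / (x 0 : ℚ) from by
        rw [Finset.sum_div]; exact Finset.sum_congr rfl fun i _ => (mul_div_assoc _ _ _).symm]
      rw [this, zero_div]
    · intro I hI hIu
      rw [show ∑ i ∈ I, (a i : ℚ) * ((x i : ℚ) / (x 0 : ℚ))
          = (∑ i ∈ I, (a i : ℚ) * (x i : ℚ)) / (x 0 : ℚ) from by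
        rw [Finset.sum_div]; exact Finset.sum_congr rfl fun i _ => (mul_div_assoc _ _ _).symm]
      apply div_ne_zero _ hx0
      have := hnd I hI hIu
      exact_mod_cast (by exact_mod_cast this : ((∑ i ∈ I, a i * x i : ℤ) : ℚ) ≠ 0)
    · intro j
      rw [hi0, div_mul_cancel₀ _ hx0]
end
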